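/- arXiv:2404.14245 — 10 statements merged into one kernel-verified Lean document; each statement's English description precedes it below -/
import Mathlib

section
/- If Σ is a finite alphabet, f : List Σ → ℕ is in #FA, and c ∈ ℕ, then the truncated subtraction w ↦ max(f(w) − c, 0) (i.e., f(w) ∸ c in ℕ) is in #FA. -/
/-- A function `f : List α → ℕ` on words over a finite alphabet `α` is in #FA
(computed by a finite ℕ-weighted automaton) if there are matrices `A σ` and
vectors `a`, `b` over ℕ such that `f w = aᵀ · A w₁ ⋯ A wₗ · b`. -/
def InFA {α : Type} [Fintype α] (f : List α → ℕ) : Prop :=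
  ∃ (n : ℕ) (A : α → Matrix (Fin n) (Fin n) ℕ) (a b : Fin n → ℕ),
    ∀ w : List α, f w = dotProduct a (Matrix.mulVec (List.prod (List.map A w)) b)

set_option linter.unusedSectionVars false

namespace InFASub

lemma sum_map_eq {β : Type} [Fintype β] [DecidableEq β] [BEq β] [LawfulBEq β]
    (l : List β) (h : β → ℕ) :
    (l.map h).sum = ∑ y, l.count y * h y := by
  induction l with
  | nil => simp
  | cons x l ih =>
      simp only [List.map_cons, List.sum_cons, List.count_cons]
      have key : ∀ y : β, (l.count y + if x == y then 1 else 0) * h y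
          = l.count y * h y + (if y = x then h y else 0) := by
        intro y
        by_cases hxy : x = y
        · subst hxy; simp [add_mul]
        · rw [if_neg (by simpa using hxy), if_neg (fun h' => hxy h'.symm)]; simp
      simp only [key]
      rw [Finset.sum_add_distrib, Finset.sum_ite_eq' Finset.univ x h, ih]
      simp [add_comm]

variable {n : ℕ}

abbrev St (n : ℕ) := Finset (Fin n) × Fin n

def blk (r : Fin n → ℕ) : List (Fin n) :=
  (List.finRange n).flatMap fun q => List.replicate (r q) q

lemma blk_count (r : Fin n → ℕ) (q : Fin n) : (blk r).count q = r q := by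
  rw [blk, List.count_flatMap]
  have hf : (List.count q ∘ fun p => List.replicate (r p) p)
      = fun x => if q = x then r x else 0 := by
    funext x
    by_cases h : q = x
    · subst h; simp [List.count_replicate]
    · simp [List.count_replicate, h]
      intro h'; exact absurd h'.symm h
  rw [hf, ← Fin.sum_univ_def]
  simp

lemma blk_mem (r : Fin n → ℕ) (p : Fin n) : p ∈ (blk r).toFinset ↔ 1 ≤ r p := by
  simp [blk, List.mem_replicate]
  omega

/-- annotate each element with the set of elements strictly before it (plus base B) -/
def ann : Finset (Fin n) → List (Fin n) → List (St n)
  | _, [] => []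
  | B, x :: xs => (B, x) :: ann (insert x B) xs

lemma ann_append (l₁ l₂ : List (Fin n)) : ∀ B,
    ann B (l₁ ++ l₂) = ann B l₁ ++ ann (B ∪ l₁.toFinset) l₂ := by
  induction l₁ with
  | nil => intro B; simp [ann]
  | cons x l ih =>
      intro B
      simp only [List.cons_append, ann, List.append_eq, ih, List.toFinset_cons,
        Finset.insert_union, Finset.union_insert]

def rch (M : Matrix (Fin n) (Fin n) ℕ) (S : Finset (Fin n)) : Finset (Fin n) :=
  Finset.univ.filter (fun p => ∃ r ∈ S, 1 ≤ M r p)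

lemma rch_empty (M : Matrix (Fin n) (Fin n) ℕ) : rch M ∅ = ∅ := by
  ext p; simp [rch]

lemma rch_insert (M : Matrix (Fin n) (Fin n) ℕ) (e : Fin n) (B : Finset (Fin n)) :
    rch M (insert e B) = rch M B ∪ (blk (M e)).toFinset := by
  ext p
  simp only [rch, Finset.mem_filter, Finset.mem_union, Finset.mem_insert, blk_mem,
    Finset.mem_univ, true_and]
  constructor
  · rintro ⟨r, (rfl | hr), h⟩
    · exact Or.inr h
    · exact Or.inl ⟨r, hr, h⟩
  · rintro (⟨r, hr, h⟩ | h)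
    · exact ⟨r, Or.inr hr, h⟩
    · exact ⟨e, Or.inl rfl, h⟩

lemma ann_flatMap (M : Matrix (Fin n) (Fin n) ℕ) (L : List (Fin n)) : ∀ B,
    ann (rch M B) (L.flatMap fun e => blk (M e))
      = (ann B L).flatMap fun p => ann (rch M p.1) (blk (M p.2)) := by
  induction L with
  | nil => intro B; simp [ann]
  | cons e L ih =>
      intro B
      rw [List.flatMap_cons, ann_append, ← rch_insert, ih]
      simp [ann]

end InFASub

namespace InFASub

section Automaton

variable {n : ℕ} {α : Type} [Fintype α]

def Lw (A : α → Matrix (Fin n) (Fin n) ℕ) (a : Fin n → ℕ) (w : List α) : List (Fin n) :=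
  w.foldl (fun L σ => L.flatMap fun e => blk (A σ e)) (blk a)

lemma Lw_snoc (A : α → Matrix (Fin n) (Fin n) ℕ) (a : Fin n → ℕ) (w : List α) (σ : α) :
    Lw A a (w ++ [σ]) = (Lw A a w).flatMap fun e => blk (A σ e) := by
  simp [Lw, List.foldl_append]

def a' (a : Fin n → ℕ) : St n → ℕ := fun p => (ann ∅ (blk a)).count p

def A' (A : α → Matrix (Fin n) (Fin n) ℕ) (σ : α) : Matrix (St n) (St n) ℕ :=
  fun p p' => (ann (rch (A σ) p.1) (blk (A σ p.2))).count p'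

def b' (b : Fin n → ℕ) : St n → ℕ :=
  fun p => if ∃ q ∈ p.1, 1 ≤ b q then b p.2 else b p.2 - 1

lemma count_Lw (A : α → Matrix (Fin n) (Fin n) ℕ) (a : Fin n → ℕ) (w : List α) :
    ∀ q : Fin n, (Lw A a w).count q = Matrix.vecMul a (List.prod (List.map A w)) q := by
  induction w using List.reverseRecOn with
  | nil => intro q; simp [Lw, blk_count, Matrix.vecMul_one]
  | append_singleton w σ ih =>
      intro q
      rw [Lw_snoc, List.count_flatMap]
      have hf : (List.count q ∘ fun e => blk (A σ e)) = fun e => A σ e q := by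
        funext e; exact blk_count _ _
      rw [hf, sum_map_eq]
      rw [List.map_append, List.map_cons, List.map_nil, List.prod_append, List.prod_cons,
        List.prod_nil, mul_one, ← Matrix.vecMul_vecMul]
      have e1 : Matrix.vecMul (Matrix.vecMul a (List.prod (List.map A w))) (A σ) q
          = ∑ y : Fin n, Matrix.vecMul a (List.prod (List.map A w)) y * A σ y q := rfl
      rw [e1]
      simp only [ih]

lemma ann_count (A : α → Matrix (Fin n) (Fin n) ℕ) (a : Fin n → ℕ) (w : List α) (p : St n) :
    Matrix.vecMul (a' a) (List.prod (List.map (A' A) w)) p = (ann ∅ (Lw A a w)).count p := by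
  induction w using List.reverseRecOn generalizing p with
  | nil => simp [Matrix.vecMul_one, a', Lw]
  | append_singleton w σ ih =>
      rw [List.map_append, List.map_cons, List.map_nil, List.prod_append, List.prod_cons,
        List.prod_nil, mul_one, ← Matrix.vecMul_vecMul]
      have e1 : Matrix.vecMul (Matrix.vecMul (a' a) (List.prod (List.map (A' A) w))) (A' A σ) p
          = ∑ r : St n, Matrix.vecMul (a' a) (List.prod (List.map (A' A) w)) r * A' A σ r p := rfl
      rw [e1]
      simp only [ih]
      rw [← sum_map_eq (ann ∅ (Lw A a w)) (fun r => A' A σ r p), Lw_snoc]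
      have h2 := ann_flatMap (A σ) (Lw A a w) ∅
      rw [rch_empty] at h2
      rw [h2, List.count_flatMap]
      rfl

lemma final_sum (b : Fin n → ℕ) (L : List (Fin n)) : ∀ B : Finset (Fin n),
    ((ann B L).map (b' b)).sum
      = if ∃ q ∈ B, 1 ≤ b q then (L.map b).sum else (L.map b).sum - 1 := by
  induction L with
  | nil => intro B; split <;> simp [ann]
  | cons x L ih =>
      intro B
      simp only [ann, List.map_cons, List.sum_cons, ih, List.map_cons, List.sum_cons]
      by_cases hB : ∃ q ∈ B, 1 ≤ b q
      · have hb' : b' b (B, x) = b x := if_pos hB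
        have h2 : ∃ q ∈ insert x B, 1 ≤ b q := by
          obtain ⟨q, hq, hbq⟩ := hB
          exact ⟨q, Finset.mem_insert_of_mem hq, hbq⟩
        rw [hb', if_pos h2, if_pos hB]
      · have h1 : b' b (B, x) = b x - 1 := if_neg hB
        rw [if_neg hB, h1]
        by_cases hx : 1 ≤ b x
        · have h2 : ∃ q ∈ insert x B, 1 ≤ b q := ⟨x, Finset.mem_insert_self x B, hx⟩
          rw [if_pos h2]
          omega
        · have h2 : ¬ ∃ q ∈ insert x B, 1 ≤ b q := by
            rintro ⟨q, hq, hbq⟩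
            rcases Finset.mem_insert.mp hq with rfl | hq'
            · exact hx hbq
            · exact hB ⟨q, hq', hbq⟩
          rw [if_neg h2]
          omega

theorem key (A : α → Matrix (Fin n) (Fin n) ℕ) (a b : Fin n → ℕ) (w : List α) :
    dotProduct (a' a) (Matrix.mulVec (List.prod (List.map (A' A) w)) (b' b))
      = dotProduct a (Matrix.mulVec (List.prod (List.map A w)) b) - 1 := by
  rw [Matrix.dotProduct_mulVec, Matrix.dotProduct_mulVec]
  have hL : dotProduct (Matrix.vecMul a (List.prod (List.map A w))) b
      = ((Lw A a w).map b).sum := by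
    rw [sum_map_eq]
    exact Finset.sum_congr rfl fun q _ => congrArg (· * b q) (count_Lw A a w q).symm
  have hR : dotProduct (Matrix.vecMul (a' a) (List.prod (List.map (A' A) w))) (b' b)
      = ((ann ∅ (Lw A a w)).map (b' b)).sum := by
    rw [sum_map_eq]
    exact Finset.sum_congr rfl fun p _ => congrArg (· * b' b p) (ann_count A a w p)
  rw [hL, hR, final_sum]
  rw [if_neg (by simp)]

end Automaton

end InFASub


namespace InFASub

lemma inFA_of {α : Type} [Fintype α] (f : List α → ℕ) {Q : Type} [Fintype Q] [DecidableEq Q]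
    (A : α → Matrix Q Q ℕ) (a b : Q → ℕ)
    (h : ∀ w, f w = dotProduct a (Matrix.mulVec (List.prod (List.map A w)) b)) :
    InFA f := by
  let e : Q ≃ Fin (Fintype.card Q) := Fintype.equivFin Q
  refine ⟨Fintype.card Q, fun σ => Matrix.reindexAlgEquiv ℕ ℕ e (A σ),
    a ∘ e.symm, b ∘ e.symm, fun w => ?_⟩
  rw [h w]
  have hp : List.prod (List.map (fun σ => Matrix.reindexAlgEquiv ℕ ℕ e (A σ)) w)
      = Matrix.reindexAlgEquiv ℕ ℕ e (List.prod (List.map A w)) := by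
    rw [map_list_prod (Matrix.reindexAlgEquiv ℕ ℕ e) (List.map A w), List.map_map]
    rfl
  rw [hp, Matrix.reindexAlgEquiv_apply, Matrix.reindex_apply,
    Matrix.submatrix_mulVec_equiv _ _ _ e.symm]
  have hb : (b ∘ ⇑e.symm) ∘ ⇑e.symm.symm = b := by funext q; simp
  rw [hb]
  unfold dotProduct
  exact (Equiv.sum_comp e.symm fun q => a q * Matrix.mulVec (List.prod (List.map A w)) b q).symm

end InFASub

/-- #FA is closed under truncated subtraction of a constant. -/
theorem inFA_sub_const {α : Type} [Fintype α] (f : List α → ℕ)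
    (hf : InFA f) (c : ℕ) : InFA (fun w => f w - c) := by
  induction c with
  | zero => simpa using hf
  | succ c ih =>
      obtain ⟨n, A, a, b, h⟩ := ih
      have h1 : InFA fun w => f w - c - 1 := by
        apply InFASub.inFA_of _ (InFASub.A' A) (InFASub.a' a) (InFASub.b' b)
        intro w
        rw [InFASub.key A a b w, ← h w]
      simpa [Nat.sub_sub] using h1
end

section
/- If Σ is a finite alphabet, f : List Σ → ℕ is in #FA, and c ∈ ℕ, then the clamped function w ↦ min(f(w), c) is in #FA. -/
lemma min_mul_right' {x y v c : ℕ} (h : min x c = min y c) :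
    min (x * v) c = min (y * v) c := by
  rcases Nat.eq_zero_or_pos v with hv | hv
  · subst hv; simp
  rcases Nat.lt_or_ge x c with h1 | h1
  · have : y = x := by omega
    subst this; rfl
  · have h2 : c ≤ y := by omega
    have hx : c ≤ x * v := h1.trans (Nat.le_mul_of_pos_right x hv)
    have hy : c ≤ y * v := h2.trans (Nat.le_mul_of_pos_right y hv)
    omega

lemma min_mul_left' {u x y c : ℕ} (h : min x c = min y c) :
    min (u * x) c = min (u * y) c := by
  rw [Nat.mul_comm u x, Nat.mul_comm u y]; exact min_mul_right' h

lemma min_sum_eq {ι : Type*} (s : Finset ι) (c : ℕ) (f g : ι → ℕ)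
    (h : ∀ k ∈ s, min (f k) c = min (g k) c) :
    min (∑ k ∈ s, f k) c = min (∑ k ∈ s, g k) c := by
  by_cases hall : ∀ k ∈ s, f k = g k
  · rw [Finset.sum_congr rfl hall]
  · push_neg at hall
    obtain ⟨k, hk, hne⟩ := hall
    have hk2 := h k hk
    have hcf : c ≤ f k := by omega
    have hcg : c ≤ g k := by omega
    have h1 : c ≤ ∑ k ∈ s, f k :=
      hcf.trans (Finset.single_le_sum (fun _ _ => Nat.zero_le _) hk)
    have h2 : c ≤ ∑ k ∈ s, g k :=
      hcg.trans (Finset.single_le_sum (fun _ _ => Nat.zero_le _) hk)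
    omega

/-- Any function computed by a deterministic finite automaton with ℕ output is in #FA. -/
lemma inFA_det {α : Type} [Fintype α] {S : Type} [Fintype S] [DecidableEq S]
    (δ : α → S → S) (s₀ : S) (out : S → ℕ) :
    InFA (fun w => out (w.foldl (fun s σ => δ σ s) s₀)) := by
  classical
  let e : S ≃ Fin (Fintype.card S) := Fintype.equivFin S
  refine ⟨Fintype.card S, fun σ => Matrix.of fun i j => if j = e (δ σ (e.symm i)) then 1 else 0,
    fun i => if i = e s₀ then 1 else 0, fun i => out (e.symm i), ?_⟩
  have key : ∀ (w : List α) (s : S),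
      Matrix.mulVec
        (List.prod (List.map (fun σ => Matrix.of fun i j =>
          if j = e (δ σ (e.symm i)) then (1:ℕ) else 0) w))
        (fun i => out (e.symm i)) (e s)
        = out (w.foldl (fun s σ => δ σ s) s) := by
    intro w
    induction w with
    | nil => intro s; simp [Matrix.mulVec, dotProduct, Matrix.one_apply, ite_mul, Finset.sum_ite_eq]
    | cons σ w ih =>
      intro s
      simp only [List.map_cons, List.prod_cons, List.foldl_cons]
      rw [← Matrix.mulVec_mulVec]
      have : Matrix.mulVec (Matrix.of fun i j => if j = e (δ σ (e.symm i)) then (1:ℕ) else 0)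
          (Matrix.mulVec (List.prod (List.map (fun σ => Matrix.of fun i j =>
            if j = e (δ σ (e.symm i)) then (1:ℕ) else 0) w))
            (fun i => out (e.symm i))) (e s)
          = Matrix.mulVec (List.prod (List.map (fun σ => Matrix.of fun i j =>
            if j = e (δ σ (e.symm i)) then (1:ℕ) else 0) w))
            (fun i => out (e.symm i)) (e (δ σ s)) := by
        simp [Matrix.mulVec, dotProduct, ite_mul, Finset.sum_ite_eq']
      rw [this, ih]
  intro w
  show out (List.foldl (fun s σ => δ σ s) s₀ w) = _
  rw [← key w s₀]
  simp [dotProduct, ite_mul, Finset.sum_ite_eq']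

/-- #FA is closed under clamping with a constant. -/
theorem inFA_min_const {α : Type} [Fintype α] (f : List α → ℕ)
    (hf : InFA f) (c : ℕ) : InFA (fun w => min (f w) c) := by
  classical
  obtain ⟨n, A, a, b, hA⟩ := hf
  set S := Matrix (Fin n) (Fin n) (Fin (c + 1)) with hS
  let tr : Matrix (Fin n) (Fin n) ℕ → S := fun P i j =>
    ⟨min (P i j) c, Nat.lt_succ_of_le (min_le_right _ _)⟩
  let lift : S → Matrix (Fin n) (Fin n) ℕ := fun s i j => (s i j : ℕ)
  have hlift : ∀ P i j, lift (tr P) i j = min (P i j) c := fun _ _ _ => rfl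
  -- key: truncating then multiplying = multiplying then truncating
  have key1 : ∀ P Q : Matrix (Fin n) (Fin n) ℕ, tr (lift (tr P) * Q) = tr (P * Q) := by
    intro P Q
    funext i j
    apply Fin.ext
    simp only [tr, Matrix.mul_apply, hlift]
    exact min_sum_eq _ c _ _ (fun k _ => by
      apply min_mul_right'
      omega)
  let δ : α → S → S := fun σ s => tr (lift s * A σ)
  let out : S → ℕ := fun s => min (dotProduct a (Matrix.mulVec (lift s) b)) c
  have inv : ∀ (w : List α) (P : Matrix (Fin n) (Fin n) ℕ),
      w.foldl (fun s σ => δ σ s) (tr P) = tr (P * List.prod (List.map A w)) := by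
    intro w
    induction w with
    | nil => intro P; simp
    | cons σ w ih =>
      intro P
      simp only [List.foldl_cons, List.map_cons, List.prod_cons]
      show List.foldl (fun s σ => δ σ s) (tr (lift (tr P) * A σ)) w = _
      rw [key1, ih, mul_assoc]
  have hout : ∀ P : Matrix (Fin n) (Fin n) ℕ, out (tr P)
      = min (dotProduct a (Matrix.mulVec P b)) c := by
    intro P
    simp only [out, dotProduct, Matrix.mulVec, hlift]
    exact min_sum_eq _ c _ _ (fun i _ => by
      apply min_mul_left'
      exact min_sum_eq _ c _ _ (fun j _ => min_mul_right' (by omega)))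
  have : (fun w : List α => min (f w) c)
      = fun w => out (w.foldl (fun s σ => δ σ s) (tr 1)) := by
    funext w
    rw [inv, hout, one_mul, hA]
  rw [this]
  exact inFA_det δ (tr 1) out
end

section
/- If Σ is a finite alphabet, f : List Σ → ℕ is in #FA, and c ∈ ℕ, then each of the indicator functions w ↦ (1 if f(w) = c else 0), w ↦ (1 if f(w) ≤ c else 0), and w ↦ (1 if f(w) ≥ c else 0) is in #FA. -/
lemma cap_mul_add (N x y s₁ s₂ : ℕ) (h : min s₁ N = min s₂ N) :
    min (min x N * y + s₁) N = min (x * y + s₂) N := by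
  rcases le_total x N with hx | hx
  · rw [min_eq_left hx]; omega
  · rw [min_eq_right hx]
    rcases Nat.eq_zero_or_pos y with hy | hy
    · subst hy; simpa using h
    · have h1 : N ≤ N * y := Nat.le_mul_of_pos_right N hy
      have h2 : N ≤ x * y := le_trans h1 (Nat.mul_le_mul_right y hx)
      omega

lemma cap_dot {n : ℕ} (N : ℕ) (v u : Fin n → ℕ) :
    min (dotProduct (fun i => min (v i) N) u) N = min (dotProduct v u) N := by
  classical
  unfold dotProduct
  induction (Finset.univ : Finset (Fin n)) using Finset.cons_induction with
  | empty => simp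
  | cons i s hi ih =>
    rw [Finset.sum_cons, Finset.sum_cons]
    exact cap_mul_add N (v i) (u i) _ _ ih

lemma dfa_matrix {α : Type} {m : ℕ} (δ : α → Fin m → Fin m) (out : Fin m → ℕ)
    (w : List α) (s : Fin m) :
    dotProduct (fun i => if i = s then 1 else 0)
      (Matrix.mulVec (List.prod (List.map
        (fun σ => Matrix.of fun i j => if δ σ i = j then (1:ℕ) else 0) w)) out)
    = out (List.foldl (fun s σ => δ σ s) s w) := by
  induction w generalizing s with
  | nil => simp [dotProduct]
  | cons x t ih =>
    rw [List.map_cons, List.prod_cons, List.foldl_cons, ← Matrix.mulVec_mulVec]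
    rw [show dotProduct (fun i => if i = s then (1:ℕ) else 0)
        (Matrix.mulVec (Matrix.of fun i j => if δ x i = j then (1:ℕ) else 0)
          (Matrix.mulVec (List.prod (List.map (fun σ => Matrix.of fun i j => if δ σ i = j then (1:ℕ) else 0) t)) out))
      = dotProduct (fun i => if i = δ x s then 1 else 0)
          (Matrix.mulVec (List.prod (List.map (fun σ => Matrix.of fun i j => if δ σ i = j then (1:ℕ) else 0) t)) out) from ?_]
    · exact ih (δ x s)
    · simp [dotProduct, Matrix.mulVec, Finset.sum_ite_eq, Finset.sum_ite_eq']

lemma inFA_comp_cap {α : Type} [Fintype α] (f : List α → ℕ) (hf : InFA f)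
    (N : ℕ) (g : ℕ → ℕ) (hg : ∀ x, g (min x N) = g x) :
    InFA (fun w => g (f w)) := by
  classical
  obtain ⟨n, A, a, b, hfab⟩ := hf
  set S := (Fin n → Fin (N + 1)) with hS
  let m := Fintype.card S
  let e : S ≃ Fin m := Fintype.equivFin S
  let ι : S → (Fin n → ℕ) := fun t i => (t i : ℕ)
  let capt : (Fin n → ℕ) → S := fun v i => ⟨min (v i) N, by omega⟩
  have hιcapt : ∀ v, ι (capt v) = fun i => min (v i) N := fun v => rfl
  let step : α → S → S := fun σ t => capt (Matrix.vecMul (ι t) (A σ))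
  -- capping before a vecMul doesn't change the capped result
  have hstepcap : ∀ σ v, step σ (capt v) = capt (Matrix.vecMul v (A σ)) := by
    intro σ v
    funext i
    apply Fin.ext
    show min (Matrix.vecMul (ι (capt v)) (A σ) i) N = min (Matrix.vecMul v (A σ) i) N
    rw [hιcapt]
    exact cap_dot N v (fun j => A σ j i)
  -- key invariant
  have key : ∀ (w : List α) (v : Fin n → ℕ),
      min (dotProduct (ι (List.foldl (fun t σ => step σ t) (capt v) w)) b) N
      = min (dotProduct v (Matrix.mulVec (List.prod (List.map A w)) b)) N := by
    intro w
    induction w with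
    | nil =>
      intro v
      rw [List.foldl_nil, List.map_nil, List.prod_nil, Matrix.one_mulVec, hιcapt]
      exact cap_dot N v b
    | cons x t ih =>
      intro v
      rw [List.foldl_cons, hstepcap, ih, List.map_cons, List.prod_cons,
        ← Matrix.mulVec_mulVec, Matrix.dotProduct_mulVec, Matrix.dotProduct_mulVec,
        Matrix.dotProduct_mulVec]
  let δ : α → Fin m → Fin m := fun σ i => e (step σ (e.symm i))
  let out : Fin m → ℕ := fun i => g (min (dotProduct (ι (e.symm i)) b) N)
  refine ⟨m, fun σ => Matrix.of fun i j => if δ σ i = j then 1 else 0,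
    (fun i => if i = e (capt a) then 1 else 0), out, ?_⟩
  intro w
  rw [dfa_matrix δ out w (e (capt a))]
  have hfold : ∀ (w : List α) (t : S),
      List.foldl (fun s σ => δ σ s) (e t) w = e (List.foldl (fun t σ => step σ t) t w) := by
    intro w
    induction w with
    | nil => intro t; rfl
    | cons x r ih =>
      intro t
      rw [List.foldl_cons, List.foldl_cons]
      show List.foldl (fun s σ => δ σ s) (e (step x (e.symm (e t)))) r = _
      rw [Equiv.symm_apply_apply, ih]
  rw [hfold w (capt a)]
  show g (f w) = g (min (dotProduct
      (ι (e.symm (e (List.foldl (fun t σ => step σ t) (capt a) w)))) b) N)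
  rw [Equiv.symm_apply_apply, key w a, ← hfab w]
  exact (hg (f w)).symm


/-- #FA contains the indicator functions of comparison with a constant. -/
theorem inFA_indicator_comparisons {α : Type} [Fintype α] (f : List α → ℕ)
    (hf : InFA f) (c : ℕ) :
    InFA (fun w => if f w = c then 1 else 0) ∧
    InFA (fun w => if f w ≤ c then 1 else 0) ∧
    InFA (fun w => if f w ≥ c then 1 else 0) := by
  refine ⟨?_, ?_, ?_⟩
  · exact inFA_comp_cap f hf (c + 1) (fun x => if x = c then 1 else 0)
      (fun x => by split_ifs <;> omega)
  · exact inFA_comp_cap f hf (c + 1) (fun x => if x ≤ c then 1 else 0)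
      (fun x => by split_ifs <;> omega)
  · exact inFA_comp_cap f hf (c + 1) (fun x => if x ≥ c then 1 else 0)
      (fun x => by split_ifs <;> omega)
end

section
/- If Σ is a finite alphabet, f : List Σ → ℕ is in #FA, and c ∈ ℕ with c ≥ 1, then the function w ↦ ⌊f(w) / c⌋ (natural number division) is in #FA. -/
open Matrix


private lemma sum_decomp {n : ℕ} (c : ℕ) (u g : Fin n → ℕ) :
    ∑ i, u i * g i = c * (∑ i, (u i / c) * g i) + ∑ i, (u i % c) * g i := by
  rw [Finset.mul_sum, ← Finset.sum_add_distrib]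
  refine Finset.sum_congr rfl fun i _ => ?_
  rw [← mul_assoc, ← add_mul, Nat.div_add_mod]

private lemma sum_div {n c : ℕ} (hc : 0 < c) (u g : Fin n → ℕ) :
    (∑ i, u i * g i) / c = (∑ i, (u i / c) * g i) + (∑ i, (u i % c) * g i) / c := by
  rw [sum_decomp c u g, Nat.mul_add_div hc]

private lemma sum_mod {n c : ℕ} (u g : Fin n → ℕ) :
    (∑ i, u i * g i) % c = (∑ i, (u i % c) * g i) % c := by
  rw [sum_decomp c u g, Nat.mul_add_mod]

private def rv {n : ℕ} (c : ℕ) [NeZero c] (u : Fin n → ℕ) : Fin n → Fin c :=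
  fun i => ⟨u i % c, Nat.mod_lt _ (NeZero.pos c)⟩

private def castR {n c : ℕ} (r : Fin n → Fin c) : Fin n → ℕ := fun i => (r i : ℕ)

private def Vfun {n : ℕ} (c : ℕ) [NeZero c] (u : Fin n → ℕ) :
    (Fin n × (Fin n → Fin c)) ⊕ (Fin n → Fin c) → ℕ
  | Sum.inl (i, r) => if r = rv c u then u i / c else 0
  | Sum.inr r => if r = rv c u then 1 else 0

private def Bmat {n : ℕ} (c : ℕ) [NeZero c] (M : Matrix (Fin n) (Fin n) ℕ) :
    Matrix ((Fin n × (Fin n → Fin c)) ⊕ (Fin n → Fin c))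
           ((Fin n × (Fin n → Fin c)) ⊕ (Fin n → Fin c)) ℕ :=
  Matrix.of fun x y =>
    match x, y with
    | Sum.inl (i, r), Sum.inl (j, r') => if r' = rv c (castR r ᵥ* M) then M i j else 0
    | Sum.inl _, Sum.inr _ => 0
    | Sum.inr r, Sum.inl (j, r') => if r' = rv c (castR r ᵥ* M) then (castR r ᵥ* M) j / c else 0
    | Sum.inr r, Sum.inr r' => if r' = rv c (castR r ᵥ* M) then 1 else 0

private lemma castR_rv {n c : ℕ} [NeZero c] (u : Fin n → ℕ) :
    castR (rv c u) = fun i => u i % c := rfl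

private lemma rv_step {n c : ℕ} [NeZero c] (u : Fin n → ℕ) (M : Matrix (Fin n) (Fin n) ℕ) :
    rv c (castR (rv c u) ᵥ* M) = rv c (u ᵥ* M) := by
  funext j
  apply Fin.ext
  show ((castR (rv c u)) ᵥ* M) j % c = ((u ᵥ* M) j) % c
  rw [castR_rv]
  simp only [Matrix.vecMul, dotProduct]
  exact (sum_mod u fun i => M i j).symm

private lemma vecMul_apply {n : ℕ} (u : Fin n → ℕ) (M : Matrix (Fin n) (Fin n) ℕ) (j : Fin n) :
    (u ᵥ* M) j = ∑ i, u i * M i j := by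
  simp [Matrix.vecMul, dotProduct]

private lemma step_lemma {n c : ℕ} [NeZero c] (u : Fin n → ℕ) (M : Matrix (Fin n) (Fin n) ℕ) :
    Vfun c u ᵥ* Bmat c M = Vfun c (u ᵥ* M) := by
  have hc : 0 < c := NeZero.pos c
  funext x
  cases x with
  | inl p =>
    obtain ⟨j, r'⟩ := p
    show (∑ y, Vfun c u y * Bmat c M y (Sum.inl (j, r'))) = Vfun c (u ᵥ* M) (Sum.inl (j, r'))
    simp only [Vfun, Bmat, Matrix.of_apply, Fintype.sum_sum_type, Fintype.sum_prod_type,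
      ite_mul, zero_mul, one_mul, Finset.sum_ite_eq', Finset.mem_univ, if_true, rv_step]
    by_cases h : r' = rv c (u ᵥ* M)
    · simp only [h, if_pos rfl]
      have h1 : (castR (rv c u) ᵥ* M) j = ∑ i, (u i % c) * M i j := by
        rw [castR_rv, vecMul_apply]
      rw [h1, _root_.vecMul_apply u M j, sum_div hc u fun i => M i j]
      simp
    · simp [h]
  | inr r' =>
    show (∑ y, Vfun c u y * Bmat c M y (Sum.inr r')) = Vfun c (u ᵥ* M) (Sum.inr r')
    simp only [Vfun, Bmat, Matrix.of_apply, Fintype.sum_sum_type, Fintype.sum_prod_type,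
      ite_mul, zero_mul, one_mul, mul_zero, Finset.sum_const_zero, zero_add,
      Finset.sum_ite_eq', Finset.mem_univ, if_true, rv_step]

private lemma final_lemma {n c : ℕ} [NeZero c] (u bvec : Fin n → ℕ) :
    (Vfun c u ⬝ᵥ fun x => Sum.elim (fun p : Fin n × (Fin n → Fin c) => bvec p.1)
      (fun r => (castR r ⬝ᵥ bvec) / c) x) = (u ⬝ᵥ bvec) / c := by
  have hc : 0 < c := NeZero.pos c
  simp only [dotProduct, Vfun, Fintype.sum_sum_type, Fintype.sum_prod_type,
    ite_mul, zero_mul, one_mul, Finset.sum_ite_eq', Finset.mem_univ, if_true, Sum.elim_inl,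
    Sum.elim_inr]
  rw [sum_div hc u bvec, castR_rv]

private lemma inFA_of_fintype {α : Type} [Fintype α] (f : List α → ℕ)
    {ι : Type} [Fintype ι] [DecidableEq ι]
    (A : α → Matrix ι ι ℕ) (a b : ι → ℕ)
    (h : ∀ w, f w = a ⬝ᵥ ((List.map A w).prod *ᵥ b)) : InFA f := by
  classical
  let e := Fintype.equivFin ι
  refine ⟨Fintype.card ι, fun σ => Matrix.reindexAlgEquiv ℕ ℕ e (A σ),
    a ∘ e.symm, b ∘ e.symm, fun w => ?_⟩
  rw [h w]
  have hp : (List.map (fun σ => Matrix.reindexAlgEquiv ℕ ℕ e (A σ)) w).prod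
      = Matrix.reindexAlgEquiv ℕ ℕ e (List.map A w).prod := by
    have h2 : (fun σ => (Matrix.reindexAlgEquiv ℕ ℕ e) (A σ))
        = (fun m => (Matrix.reindexAlgEquiv ℕ ℕ e) m) ∘ A := rfl
    rw [h2, ← List.map_map]
    exact (map_list_prod (Matrix.reindexAlgEquiv ℕ ℕ e) _).symm
  rw [hp]
  simp only [Matrix.reindexAlgEquiv_apply, Matrix.reindex_apply]
  rw [Matrix.submatrix_mulVec_equiv]
  show a ⬝ᵥ _ = (a ∘ e.symm) ⬝ᵥ ((List.map A w).prod *ᵥ (b ∘ e.symm ∘ e.symm.symm)) ∘ e.symm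
  simp only [Equiv.symm_symm, Function.comp_assoc]
  have : (b ∘ (e.symm ∘ e)) = b := by funext i; simp
  rw [this]
  simp only [dotProduct, Function.comp_apply]
  exact (Equiv.sum_comp e.symm fun i => a i * ((List.map A w).prod *ᵥ b) i).symm

/-- #FA is closed under (floored) division by a positive constant. -/
theorem inFA_div_const {α : Type} [Fintype α] (f : List α → ℕ)
    (hf : InFA f) (c : ℕ) (hc : 1 ≤ c) : InFA (fun w => f w / c) := by
  classical
  obtain ⟨n, A, a, b, hA⟩ := hf
  haveI : NeZero c := ⟨Nat.one_le_iff_ne_zero.mp hc⟩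
  have key : ∀ (u : Fin n → ℕ) (w : List α),
      Vfun c u ᵥ* (List.map (fun σ => Bmat c (A σ)) w).prod
        = Vfun c (u ᵥ* (List.map A w).prod) := by
    intro u w
    induction w generalizing u with
    | nil => simp
    | cons σ w ih =>
      simp only [List.map_cons, List.prod_cons, ← Matrix.vecMul_vecMul, step_lemma]
      exact ih (u ᵥ* A σ)
  refine inFA_of_fintype _ (fun σ => Bmat c (A σ)) (Vfun c a)
    (fun x => Sum.elim (fun p : Fin n × (Fin n → Fin c) => b p.1)
      (fun r => (castR r ⬝ᵥ b) / c) x) (fun w => ?_)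
  rw [Matrix.dotProduct_mulVec, key a w]
  rw [final_lemma]
  rw [hA w, Matrix.dotProduct_mulVec]
end

section
/- If Σ is a finite alphabet, f : List Σ → ℕ is in #FA, c ∈ ℕ with c ≥ 1, and d ∈ ℕ with d < c, then the indicator function w ↦ (1 if f(w) ≡ d (mod c) else 0) is in #FA. -/
/-- #FA contains the indicator of a congruence condition
`f w ≡ d (mod c)` for constants `c ≥ 1` and `d < c`. -/
theorem inFA_mod_indicator {α : Type} [Fintype α] (f : List α → ℕ)
    (hf : InFA f) (c : ℕ) (hc : 1 ≤ c) (d : ℕ) (hd : d < c) :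
    InFA (fun w => if f w % c = d then 1 else 0) := by
  obtain ⟨n, A, a, b, h⟩ := hf
  haveI : NeZero c := ⟨by omega⟩
  classical
  set R := ZMod c with hR
  let cA : α → Matrix (Fin n) (Fin n) R := fun σ => (A σ).map Nat.cast
  let S := Fin n → R
  let e : S ≃ Fin (Fintype.card S) := Fintype.equivFin S
  let step : α → S → S := fun σ s => Matrix.vecMul s (cA σ)
  let run : S → List α → S := fun s w => w.foldl (fun s σ => step σ s) s
  let g : S → ℕ := fun s =>
    if dotProduct s (fun i => ((b i : ℕ) : R)) = (d : R) then 1 else 0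
  let B : α → Matrix (Fin (Fintype.card S)) (Fin (Fintype.card S)) ℕ :=
    fun σ p q => if q = e (step σ (e.symm p)) then 1 else 0
  let a' : Fin (Fintype.card S) → ℕ :=
    fun p => if p = e (fun i => ((a i : ℕ) : R)) then 1 else 0
  let b' : Fin (Fintype.card S) → ℕ := fun q => g (e.symm q)
  refine ⟨Fintype.card S, B, a', b', ?_⟩
  -- run as vecMul
  have hrun : ∀ (w : List α) (s : S),
      run s w = Matrix.vecMul s ((w.map cA).prod) := by
    intro w
    induction w with
    | nil => intro s; simp [run, Matrix.vecMul_one]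
    | cons σ w ih =>
      intro s
      have : run s (σ :: w) = run (step σ s) w := rfl
      rw [this, ih]
      simp [Matrix.vecMul_vecMul, step]
      exact Matrix.vecMul_vecMul _ _ _
  -- cast of f
  have hcast : ∀ w : List α,
      ((f w : ℕ) : R) =
        dotProduct (run (fun i => ((a i : ℕ) : R)) w) (fun i => ((b i : ℕ) : R)) := by
    intro w
    rw [hrun, ← Matrix.dotProduct_mulVec, h w]
    have hprod : ((w.map A).prod).map (Nat.cast : ℕ → R) = (w.map cA).prod := by
      have := map_list_prod ((Nat.castRingHom R).mapMatrix) (w.map A)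
      rw [List.map_map] at this; exact this
    rw [← hprod]
    simp [dotProduct, Matrix.mulVec, Matrix.map_apply, Finset.mul_sum]
    rw [Nat.cast_sum]; refine Finset.sum_congr rfl fun x _ => ?_
    rw [Nat.cast_sum]; refine Finset.sum_congr rfl fun i _ => ?_
    exact (Nat.cast_mul _ _).trans (congrArg _ (Nat.cast_mul _ _))
  -- product of B acts deterministically
  have hmul : ∀ (w : List α) (p : Fin (Fintype.card S)),
      Matrix.mulVec ((w.map B).prod) b' p = g (run (e.symm p) w) := by
    intro w
    induction w with
    | nil => intro p; simp [run, b']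
    | cons σ w ih =>
      intro p
      rw [List.map_cons, List.prod_cons, ← Matrix.mulVec_mulVec]
      have : Matrix.mulVec ((w.map B).prod) b' = fun q => g (run (e.symm q) w) := by
        funext q; exact ih q
      rw [this]
      simp only [Matrix.mulVec, dotProduct, B]
      rw [Finset.sum_eq_single (e (step σ (e.symm p)))]
      · simp [run]
      · intro q _ hq; simp [hq]
      · intro hq; exact absurd (Finset.mem_univ _) hq
  intro w
  have key : dotProduct a' (Matrix.mulVec ((w.map B).prod) b')
      = g (run (fun i => ((a i : ℕ) : R)) w) := by
    rw [dotProduct]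
    rw [Finset.sum_eq_single (e (fun i => ((a i : ℕ) : R)))]
    · simp [a', hmul]
    · intro q _ hq; simp [a', hq]
    · intro hq; exact absurd (Finset.mem_univ _) hq
  rw [key]
  simp only [g, ← hcast]
  congr 1
  rw [eq_iff_iff]
  constructor
  · intro hmod
    have h2 : f w ≡ d [MOD c] := by rwa [Nat.ModEq, Nat.mod_eq_of_lt hd]
    exact (ZMod.natCast_eq_natCast_iff (f w) d c).mpr h2
  · intro hmod
    have h2 := (ZMod.natCast_eq_natCast_iff (f w) d c).mp hmod
    rwa [Nat.ModEq, Nat.mod_eq_of_lt hd] at h2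
end

section
/- If Σ is a finite alphabet, f : List Σ → ℕ is in #FA, and c ∈ ℕ, then the function w ↦ (f(w) choose c) (the binomial coefficient, equal to 0 when f(w) < c) is in #FA. -/
open MvPolynomial Finset

namespace InFAChoose

variable {τ : Type*}


/-- Total weight (degree) of an exponent vector. -/
def wt (d : τ →₀ ℕ) : ℕ := d.sum fun _ m => m

lemma wt_add (d₁ d₂ : τ →₀ ℕ) : wt (d₁ + d₂) = wt d₁ + wt d₂ :=
  Finsupp.sum_add_index' (fun _ => rfl) (fun _ _ _ => rfl)

lemma wt_eq_zero {d : τ →₀ ℕ} (h : wt d = 0) : d = 0 := by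
  ext i
  by_contra hi
  simp only [Finsupp.coe_zero, Pi.zero_apply] at hi
  have hmem : i ∈ d.support := Finsupp.mem_support_iff.mpr hi
  have : d i ≤ wt d := Finset.single_le_sum (f := fun j => d j) (fun _ _ => Nat.zero_le _) hmem
  omega

lemma wt_single (x : τ) (m : ℕ) : wt (Finsupp.single x m) = m :=
  Finsupp.sum_single_index rfl

lemma wt_eq [Fintype τ] (d : τ →₀ ℕ) : wt d = ∑ i, d i :=
  Finsupp.sum_fintype _ _ (fun _ => rfl)

lemma le_wt [Fintype τ] (d : τ →₀ ℕ) (i : τ) : d i ≤ wt d := by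
  rw [wt_eq]
  exact Finset.single_le_sum (f := fun j => d j) (fun _ _ => Nat.zero_le _) (Finset.mem_univ i)

/-- All coefficients of exponent weight `< p` vanish. -/
def Below (p : ℕ) (A : MvPolynomial τ ℕ) : Prop := ∀ d, wt d < p → coeff d A = 0

lemma below_mul {p q : ℕ} {A B : MvPolynomial τ ℕ} (hA : Below p A) (hB : Below q B) :
    Below (p + q) (A * B) := by
  classical
  intro d hd
  rw [coeff_mul]
  refine Finset.sum_eq_zero fun x hx => ?_
  have hx' : x.1 + x.2 = d := Finset.HasAntidiagonal.mem_antidiagonal.mp hx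
  have hw : wt x.1 + wt x.2 = wt d := by rw [← wt_add, hx']
  rcases lt_or_ge (wt x.1) p with h | h
  · rw [hA _ h, zero_mul]
  · rw [hB _ (by omega), mul_zero]

lemma below_one {R : MvPolynomial τ ℕ} (hR : constantCoeff R = 0) : Below 1 R := by
  intro d hd
  have : d = 0 := wt_eq_zero (by omega)
  subst this
  exact hR

lemma below_pow {R : MvPolynomial τ ℕ} (hR : constantCoeff R = 0) (r : ℕ) :
    Below r (R ^ r) := by
  induction r with
  | zero => intro d hd; omega
  | succ r ih =>
      rw [pow_succ]
      exact below_mul ih (below_one hR)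

lemma below_prod {n : ℕ} (g : Fin n → MvPolynomial τ ℕ) (hg : ∀ i, constantCoeff (g i) = 0)
    (r : Fin n → ℕ) : Below (∑ i, r i) (∏ i, g i ^ r i) := by
  classical
  induction (Finset.univ : Finset (Fin n)) using Finset.cons_induction with
  | empty =>
      simp only [Finset.prod_empty, Finset.sum_empty]
      intro d hd; omega
  | cons i s hi ih =>
      rw [Finset.prod_cons, Finset.sum_cons]
      exact below_mul (below_pow (hg i) (r i)) ih



lemma exists_one_add_pow {p : MvPolynomial τ ℕ} (hp : constantCoeff p = 0) (m : ℕ) :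
    ∃ q, constantCoeff q = 0 ∧ (1 + p) ^ m = 1 + q := by
  induction m with
  | zero => exact ⟨0, by simp⟩
  | succ m ih =>
      obtain ⟨q, hq0, hq⟩ := ih
      refine ⟨q + p + q * p, ?_, ?_⟩
      · simp [hq0, hp]
      · rw [pow_succ, hq]; ring

lemma exists_one_add_prod {ι : Type*} (s : Finset ι) (p : ι → MvPolynomial τ ℕ)
    (hp : ∀ j, constantCoeff (p j) = 0) (m : ι → ℕ) :
    ∃ R, constantCoeff R = 0 ∧ ∏ j ∈ s, (1 + p j) ^ m j = 1 + R := by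
  classical
  induction s using Finset.cons_induction with
  | empty => exact ⟨0, by simp⟩
  | cons i s hi ih =>
      obtain ⟨R, hR0, hR⟩ := ih
      obtain ⟨q, hq0, hq⟩ := exists_one_add_pow (hp i) (m i)
      refine ⟨q + R + q * R, ?_, ?_⟩
      · simp [hR0, hq0]
      · rw [Finset.prod_cons, hR, hq]; ring

lemma coeff_one_add_X_pow (m c : ℕ) :
    coeff (Finsupp.single () c) ((1 + X () : MvPolynomial Unit ℕ) ^ m) = m.choose c := by
  rw [add_comm (1 : MvPolynomial Unit ℕ) (X ()), add_pow]
  simp only [one_pow, mul_one]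
  rw [coeff_sum]
  have : ∀ k ∈ Finset.range (m + 1),
      coeff (Finsupp.single () c) (X () ^ k * (m.choose k : MvPolynomial Unit ℕ))
        = if k = c then m.choose k else 0 := by
    intro k _
    rw [← C_eq_coe_nat, mul_comm, coeff_C_mul, coeff_X_pow]
    have : Finsupp.single () k = Finsupp.single () c ↔ k = c := by
      constructor
      · intro h; simpa using DFunLike.congr_fun h ()
      · rintro rfl; rfl
    by_cases hk : k = c <;> simp [this, hk]
  rw [Finset.sum_congr rfl this, Finset.sum_ite_eq' (Finset.range (m + 1)) c]
  by_cases hc : c ∈ Finset.range (m + 1)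
  · simp [hc]
  · simp only [hc, if_false]
    rw [Finset.mem_range] at hc
    exact (Nat.choose_eq_zero_of_lt (by omega)).symm

lemma expand {n c : ℕ} (g : Fin n → MvPolynomial τ ℕ) (hg : ∀ i, constantCoeff (g i) = 0)
    (Q : MvPolynomial (Fin n) ℕ) (d₀ : τ →₀ ℕ) (hd : wt d₀ ≤ c) :
    coeff d₀ (eval₂ C g Q) =
      ∑ r ∈ Fintype.piFinset (fun _ : Fin n => Finset.range (c + 1)),
        coeff (Finsupp.equivFunOnFinite.symm r) Q * coeff d₀ (∏ i, g i ^ r i) := by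
  classical
  -- expand eval₂ as a sum over the support
  rw [eval₂_eq, coeff_sum]
  have hterm : ∀ d : Fin n →₀ ℕ,
      coeff d₀ (C (coeff d Q) * ∏ i ∈ d.support, g i ^ d i)
        = coeff d Q * coeff d₀ (∏ i, g i ^ d i) := by
    intro d
    rw [coeff_C_mul]
    congr 2
    refine Finset.prod_subset (Finset.subset_univ _) fun i _ hi => ?_
    rw [Finsupp.notMem_support_iff.mp hi, pow_zero]
  rw [Finset.sum_congr rfl fun d _ => hterm d]
  -- now compare index sets
  set F : (Fin n →₀ ℕ) → ℕ := fun d => coeff d Q * coeff d₀ (∏ i, g i ^ d i) with hF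
  have hrhs : ∑ r ∈ Fintype.piFinset (fun _ : Fin n => Finset.range (c + 1)),
      coeff (Finsupp.equivFunOnFinite.symm r) Q * coeff d₀ (∏ i, g i ^ r i)
      = ∑ d ∈ (Fintype.piFinset (fun _ : Fin n => Finset.range (c + 1))).map
          (Finsupp.equivFunOnFinite.symm.toEmbedding : (Fin n → ℕ) ↪ (Fin n →₀ ℕ)), F d := by
    rw [Finset.sum_map]
    refine Finset.sum_congr rfl fun r _ => ?_
    simp only [hF, Equiv.coe_toEmbedding]
    rfl
  rw [hrhs]
  set S' : Finset (Fin n →₀ ℕ) := (Fintype.piFinset (fun _ : Fin n => Finset.range (c + 1))).map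
      (Finsupp.equivFunOnFinite.symm.toEmbedding) with hS'
  have hmem : ∀ d : Fin n →₀ ℕ, d ∈ S' ↔ ∀ i, d i ≤ c := by
    intro d
    rw [hS', Finset.mem_map_equiv]
    simp only [Fintype.mem_piFinset, Finset.mem_range]
    constructor
    · intro h i; have := h i; simp only [Equiv.symm_symm] at this
      simpa [Nat.lt_succ_iff] using this
    · intro h i; simp only [Equiv.symm_symm]
      simpa [Nat.lt_succ_iff] using h i
  have h1 : ∑ d ∈ Q.support, F d = ∑ d ∈ Q.support ∪ S', F d := by
    refine Finset.sum_subset (f := F) Finset.subset_union_left fun d _ hd' => ?_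
    have : coeff d Q = 0 := Finsupp.notMem_support_iff.mp hd'
    simp [hF, this]
  have h2 : ∑ d ∈ S', F d = ∑ d ∈ Q.support ∪ S', F d := by
    refine Finset.sum_subset (f := F) Finset.subset_union_right fun d _ hd' => ?_
    have : ¬ ∀ i, d i ≤ c := fun h => hd' ((hmem d).mpr h)
    push_neg at this
    obtain ⟨i, hi⟩ := this
    have hlt : wt d₀ < ∑ j, d j := by
      have h3 : d i ≤ ∑ j, d j :=
        Finset.single_le_sum (f := fun j => d j) (fun _ _ => Nat.zero_le _) (Finset.mem_univ i)
      exact lt_of_le_of_lt hd (lt_of_lt_of_le hi h3)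
    simp [hF, below_prod g hg (fun j => d j) d₀ hlt]
  rw [h1, ← h2]

/-- The generating polynomial of a vector. -/
noncomputable def Pv {n : ℕ} (v : Fin n → ℕ) : MvPolynomial (Fin n) ℕ :=
  ∏ i, (1 + X i) ^ v i

lemma eval₂_Pv {τ : Type*} {n : ℕ} (g : Fin n → MvPolynomial τ ℕ) (v : Fin n → ℕ) :
    eval₂ C g (Pv v) = ∏ i, (1 + g i) ^ v i := by
  have : eval₂ C g (Pv v) = eval₂Hom C g (Pv v) := rfl
  rw [this, Pv, map_prod]
  refine Finset.prod_congr rfl fun i _ => ?_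
  rw [map_pow, map_add, map_one, eval₂Hom_X']

lemma prod_one_add_pow_vecMul {n : ℕ} (v : Fin n → ℕ) (M : Matrix (Fin n) (Fin n) ℕ) :
    ∏ i, (∏ j, (1 + X j : MvPolynomial (Fin n) ℕ) ^ M i j) ^ v i = Pv (Matrix.vecMul v M) := by
  rw [Pv]
  have : ∀ i : Fin n, (∏ j, (1 + X j : MvPolynomial (Fin n) ℕ) ^ M i j) ^ v i
      = ∏ j, (1 + X j : MvPolynomial (Fin n) ℕ) ^ (v i * M i j) := by
    intro i
    rw [← Finset.prod_pow]
    refine Finset.prod_congr rfl fun j _ => ?_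
    rw [← pow_mul, mul_comm (M i j) (v i)]
  rw [Finset.prod_congr rfl fun i _ => this i, Finset.prod_comm]
  refine Finset.prod_congr rfl fun j _ => ?_
  rw [Finset.prod_pow_eq_pow_sum]
  congr 1

lemma prod_one_add_pow_dot {n : ℕ} (v b : Fin n → ℕ) :
    ∏ i, ((1 + X () : MvPolynomial Unit ℕ) ^ b i) ^ v i
      = (1 + X () : MvPolynomial Unit ℕ) ^ dotProduct v b := by
  have : ∀ i : Fin n, ((1 + X () : MvPolynomial Unit ℕ) ^ b i) ^ v i
      = (1 + X () : MvPolynomial Unit ℕ) ^ (v i * b i) := by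
    intro i; rw [← pow_mul, mul_comm (b i) (v i)]
  rw [Finset.prod_congr rfl fun i _ => this i, Finset.prod_pow_eq_pow_sum]
  rfl

lemma inFA_of_index {α : Type} [Fintype α] (f : List α → ℕ) (ι : Type) [Fintype ι]
    [DecidableEq ι] (A : α → Matrix ι ι ℕ) (a b : ι → ℕ)
    (h : ∀ w, f w = dotProduct a (Matrix.mulVec (List.prod (List.map A w)) b)) :
    InFA f := by
  classical
  let e : ι ≃ Fin (Fintype.card ι) := Fintype.equivFin ι
  refine ⟨Fintype.card ι, fun σ => Matrix.reindexAlgEquiv ℕ ℕ e (A σ), a ∘ e.symm, b ∘ e.symm,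
    fun w => ?_⟩
  rw [h w]
  have hprod : List.prod (List.map (fun σ => Matrix.reindexAlgEquiv ℕ ℕ e (A σ)) w)
      = Matrix.reindexAlgEquiv ℕ ℕ e (List.prod (List.map A w)) := by
    have h2 : List.map (fun σ => Matrix.reindexAlgEquiv ℕ ℕ e (A σ)) w
        = List.map (Matrix.reindexAlgEquiv ℕ ℕ e) (List.map A w) := by
      rw [List.map_map]; rfl
    rw [h2]
    exact (map_list_prod ((Matrix.reindexAlgEquiv ℕ ℕ e : Matrix ι ι ℕ ≃ₐ[ℕ] _) : Matrix ι ι ℕ →+* Matrix (Fin (Fintype.card ι)) (Fin (Fintype.card ι)) ℕ) _).symm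
  rw [hprod]
  set N := List.prod (List.map A w)
  have h1 : Matrix.mulVec (Matrix.reindexAlgEquiv ℕ ℕ e N) (b ∘ e.symm)
      = (Matrix.mulVec N b) ∘ e.symm := by
    rw [Matrix.reindexAlgEquiv_apply, Matrix.reindex_apply, Matrix.submatrix_mulVec_equiv]
    have h3 : (b ∘ ⇑e.symm) ∘ ⇑e.symm.symm = b := by ext i; simp
    rw [h3]
  rw [h1]
  simp only [dotProduct, Function.comp]
  exact (Equiv.sum_comp e.symm fun i => a i * Matrix.mulVec N b i).symm


end InFAChoose

open InFAChoose in
/-- #FA is closed under binomial coefficients with constant lower index. -/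
theorem inFA_choose_const {α : Type} [Fintype α] (f : List α → ℕ)
    (hf : InFA f) (c : ℕ) : InFA (fun w => Nat.choose (f w) c) := by
  classical
  obtain ⟨n, A, a, b, hf⟩ := hf
  -- choose the "shifted" polynomials for each matrix row and for the output vector
  have hexR : ∀ (M : Matrix (Fin n) (Fin n) ℕ) (i : Fin n),
      ∃ R : MvPolynomial (Fin n) ℕ, constantCoeff R = 0 ∧
        ∏ j, (1 + X j : MvPolynomial (Fin n) ℕ) ^ M i j = 1 + R := fun M i =>
    exists_one_add_prod Finset.univ (fun j => X j) (fun j => by simp) (M i)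
  choose R hR0 hR1 using hexR
  have hexS : ∀ i : Fin n, ∃ q : MvPolynomial Unit ℕ, constantCoeff q = 0 ∧
      (1 + X () : MvPolynomial Unit ℕ) ^ b i = 1 + q := fun i =>
    exists_one_add_pow (by simp) (b i)
  choose Sb hSb0 hSb1 using hexS
  set S : Finset (Fin n → ℕ) := Fintype.piFinset fun _ : Fin n => Finset.range (c + 1) with hS
  let e : (Fin n → ℕ) → (Fin n →₀ ℕ) := fun r => Finsupp.equivFunOnFinite.symm r
  have hwte : ∀ r : Fin n → ℕ, wt (e r) = ∑ i, r i := by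
    intro r
    rw [wt_eq]
    rfl
  let A' : α → Matrix {x // x ∈ S} {x // x ∈ S} ℕ := fun σ r k =>
    if (∑ i, (k : Fin n → ℕ) i) ≤ c
      then coeff (e (k : Fin n → ℕ)) (∏ i, R (A σ) i ^ (r : Fin n → ℕ) i) else 0
  let a' : {x // x ∈ S} → ℕ := fun r =>
    if (∑ i, (r : Fin n → ℕ) i) ≤ c then coeff (e (r : Fin n → ℕ)) (Pv a) else 0
  let b' : {x // x ∈ S} → ℕ := fun r =>
    coeff (Finsupp.single () c) (∏ i, Sb i ^ (r : Fin n → ℕ) i)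
  -- the invariant
  have key : ∀ w : List α, ∀ k : {x // x ∈ S},
      Matrix.vecMul a' (List.prod (List.map A' w)) k =
        if (∑ i, (k : Fin n → ℕ) i) ≤ c
          then coeff (e (k : Fin n → ℕ)) (Pv (Matrix.vecMul a (List.prod (List.map A w))))
          else 0 := by
    intro w
    induction w using List.reverseRecOn with
    | nil =>
        intro k
        simp only [List.map_nil, List.prod_nil, Matrix.vecMul_one, a']
    | append_singleton w σ ih =>
        intro k
        rw [List.map_append, List.map_append, List.prod_append, List.prod_append,
          List.map_singleton, List.map_singleton, List.prod_singleton, List.prod_singleton,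
          ← Matrix.vecMul_vecMul, ← Matrix.vecMul_vecMul]
        set v : Fin n → ℕ := Matrix.vecMul a (List.prod (List.map A w)) with hv
        by_cases hk : (∑ i, (k : Fin n → ℕ) i) ≤ c
        · rw [if_pos hk]
          -- P (v ⋅ A σ) = eval₂ C (R (A σ)) (P v)
          have hP : Pv (Matrix.vecMul v (A σ)) = eval₂ C (R (A σ)) (Pv v) := by
            rw [eval₂_Pv, ← prod_one_add_pow_vecMul v (A σ)]
            exact Finset.prod_congr rfl fun i _ => by rw [hR1 (A σ) i]
          have hwk : wt (e (k : Fin n → ℕ)) ≤ c := by rw [hwte]; exact hk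
          rw [hP, expand (c := c) (R (A σ)) (hR0 (A σ)) (Pv v) _ hwk]
          -- now compute the vecMul on the automaton side
          rw [Matrix.vecMul]
          simp only [dotProduct]
          refine Eq.trans (Finset.sum_congr rfl fun r _ => ?_) (Finset.sum_coe_sort S
            (fun r => coeff (e r) (Pv v) * coeff (e (k : Fin n → ℕ)) (∏ i, R (A σ) i ^ r i)))
          rw [ih r]
          have hA : A' σ r k
              = coeff (e (k : Fin n → ℕ)) (∏ i, R (A σ) i ^ (r : Fin n → ℕ) i) := by
            simp only [A', if_pos hk]
          rw [hA]
          by_cases hr : (∑ i, (r : Fin n → ℕ) i) ≤ c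
          · rw [if_pos hr]
          · rw [if_neg hr, zero_mul]
            have hz : coeff (e (k : Fin n → ℕ)) (∏ i, R (A σ) i ^ (r : Fin n → ℕ) i) = 0 := by
              refine below_prod (R (A σ)) (hR0 (A σ)) _ _ ?_
              rw [hwte]
              omega
            rw [hz, mul_zero]
        · rw [if_neg hk]
          rw [Matrix.vecMul]
          simp only [dotProduct]
          refine Finset.sum_eq_zero fun r _ => ?_
          have : A' σ r k = 0 := by simp only [A', if_neg hk]
          rw [this, mul_zero]
  -- conclude
  refine inFA_of_index _ {x // x ∈ S} A' a' b' fun w => ?_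
  have h1 : f w = dotProduct (Matrix.vecMul a (List.prod (List.map A w))) b := by
    rw [hf w, Matrix.dotProduct_mulVec]
  set v : Fin n → ℕ := Matrix.vecMul a (List.prod (List.map A w)) with hv
  rw [Matrix.dotProduct_mulVec]
  have h2 : Nat.choose (f w) c
      = coeff (Finsupp.single () c) ((1 + X () : MvPolynomial Unit ℕ) ^ (dotProduct v b)) := by
    rw [coeff_one_add_X_pow, h1]
  have hPS : ((1 + X () : MvPolynomial Unit ℕ) ^ (dotProduct v b))
      = eval₂ C Sb (Pv v) := by
    rw [eval₂_Pv, ← prod_one_add_pow_dot v b]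
    exact Finset.prod_congr rfl fun i _ => by rw [hSb1 i]
  have hwc : wt (Finsupp.single () c) ≤ c := by rw [wt_single]
  rw [h2, hPS, expand (c := c) Sb hSb0 (Pv v) _ hwc]
  rw [dotProduct]
  refine Eq.trans (Finset.sum_coe_sort S
    (fun r => coeff (e r) (Pv v) * coeff (Finsupp.single () c) (∏ i, Sb i ^ r i))).symm
    (Finset.sum_congr rfl fun r _ => ?_)
  rw [key w r]
  by_cases hr : (∑ i, (r : Fin n → ℕ) i) ≤ c
  · rw [if_pos hr]
  · rw [if_neg hr, zero_mul]
    have hz : coeff (Finsupp.single () c) (∏ i, Sb i ^ (r : Fin n → ℕ) i) = 0 := by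
      refine below_prod Sb hSb0 _ _ ?_
      rw [wt_single]
      omega
    rw [hz, mul_zero]
end

section
/- If φ : ℕ → ℕ is a functional closure property of #FA and ψ : ℕ → ℕ is any function with ψ(n) = φ(n) for all but finitely many n ∈ ℕ, then ψ is also a functional closure property of #FA. -/
open Matrix

/-- `φ : ℕ → ℕ` is a (univariate) functional closure property of #FA if
composing any #FA function with `φ` again yields an #FA function. -/
def ClosureProp (φ : ℕ → ℕ) : Prop :=
  ∀ (α : Type) [Fintype α] (f : List α → ℕ), InFA f → InFA (φ ∘ f)

def InFA2 {α : Type} [Fintype α] (f : List α → ℕ) : Prop :=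
  ∃ (I : Type) (_ : Fintype I) (_ : DecidableEq I) (A : α → Matrix I I ℕ) (a b : I → ℕ),
    ∀ w : List α, f w = a ⬝ᵥ ((List.map A w).prod *ᵥ b)

lemma infa2_of_infa {α : Type} [Fintype α] {f : List α → ℕ} (hf : InFA f) : InFA2 f := by
  obtain ⟨n, A, a, b, hab⟩ := hf
  exact ⟨Fin n, inferInstance, inferInstance, A, a, b, hab⟩

lemma infa_of_infa2 {α : Type} [Fintype α] {f : List α → ℕ} (hf : InFA2 f) : InFA f := by
  obtain ⟨I, _, _, A, a, b, hab⟩ := hf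
  let e := Fintype.equivFin I
  refine ⟨Fintype.card I, fun σ => (A σ).submatrix e.symm e.symm, a ∘ e.symm, b ∘ e.symm, ?_⟩
  intro w
  have hprod : (List.map (fun σ => (A σ).submatrix e.symm e.symm) w).prod
      = ((List.map A w).prod).submatrix e.symm e.symm := by
    induction w with
    | nil => simp [Matrix.submatrix_one_equiv]
    | cons σ w ih => simp [ih, Matrix.submatrix_mul_equiv]
  rw [hprod, Matrix.submatrix_mulVec_equiv _ _ _ e.symm]
  have : (b ∘ e.symm) ∘ (e.symm).symm = b := by
    funext i; simp
  rw [this]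
  rw [hab w]
  exact (Equiv.sum_comp e.symm fun i => a i * ((List.map A w).prod *ᵥ b) i).symm

lemma infa2_add {α : Type} [Fintype α] {f g : List α → ℕ} (hf : InFA2 f) (hg : InFA2 g) :
    InFA2 (fun w => f w + g w) := by
  obtain ⟨I, _, _, A, a, b, ha⟩ := hf
  obtain ⟨J, _, _, B, c, d, hb⟩ := hg
  refine ⟨I ⊕ J, inferInstance, inferInstance,
    fun σ => Matrix.fromBlocks (A σ) 0 0 (B σ), Sum.elim a c, Sum.elim b d, ?_⟩
  intro w
  have hprod : (List.map (fun σ => Matrix.fromBlocks (A σ) 0 0 (B σ)) w).prod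
      = Matrix.fromBlocks (List.map A w).prod 0 0 (List.map B w).prod := by
    induction w with
    | nil => simp [Matrix.fromBlocks_one]
    | cons σ w ih => simp [ih, Matrix.fromBlocks_multiply]
  rw [hprod, Matrix.fromBlocks_mulVec]
  simp [ha w, hb w]

open Kronecker in
lemma dot_kron {I J : Type} [Fintype I] [Fintype J] (a u : I → ℕ) (c v : J → ℕ) :
    (fun p : I × J => a p.1 * c p.2) ⬝ᵥ (fun p : I × J => u p.1 * v p.2)
      = (a ⬝ᵥ u) * (c ⬝ᵥ v) := by
  simp only [dotProduct]
  rw [Fintype.sum_prod_type, Finset.sum_mul_sum]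
  exact Finset.sum_congr rfl fun i _ => Finset.sum_congr rfl fun j _ => by ring

open Kronecker in
lemma infa2_mul {α : Type} [Fintype α] {f g : List α → ℕ} (hf : InFA2 f) (hg : InFA2 g) :
    InFA2 (fun w => f w * g w) := by
  obtain ⟨I, _, _, A, a, b, ha⟩ := hf
  obtain ⟨J, _, _, B, c, d, hb⟩ := hg
  refine ⟨I × J, inferInstance, inferInstance, fun σ => (A σ) ⊗ₖ (B σ),
    fun p => a p.1 * c p.2, fun p => b p.1 * d p.2, ?_⟩
  intro w
  have hprod : (List.map (fun σ => A σ ⊗ₖ B σ) w).prod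
      = (List.map A w).prod ⊗ₖ (List.map B w).prod := by
    induction w with
    | nil => simpa using (Matrix.one_kronecker_one (α := ℕ) (m := I) (n := J)).symm
    | cons σ w ih => simp [ih, Matrix.mul_kronecker_mul]
  have hmv : (((List.map A w).prod ⊗ₖ (List.map B w).prod) *ᵥ fun p : I × J => b p.1 * d p.2)
      = fun p : I × J => ((List.map A w).prod *ᵥ b) p.1 * ((List.map B w).prod *ᵥ d) p.2 := by
    funext p
    exact dot_kron ((List.map A w).prod p.1) b ((List.map B w).prod p.2) d
  show f w * g w = _
  rw [ha w, hb w, hprod, hmv]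
  exact (dot_kron a _ c _).symm

lemma cap_sum {I : Type} (k : ℕ) (u : I → ℕ) (s : Finset I) :
    min (∑ i ∈ s, u i) k = min (∑ i ∈ s, min (u i) k) k := by
  classical
  induction s using Finset.induction_on with
  | empty => simp
  | insert _ _ hx ih => rw [Finset.sum_insert hx, Finset.sum_insert hx]; omega

lemma cap_dot_s8 {I : Type} [Fintype I] (k : ℕ) (v a : I → ℕ) :
    min (∑ i, min (v i) k * a i) k = min (∑ i, v i * a i) k := by
  have h1 : ∀ i, min (v i * a i) k ≤ min (v i) k * a i := by
    intro i
    rcases Nat.eq_zero_or_pos (a i) with hz | hz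
    · simp [hz]
    · rcases le_total (v i) k with hv | hv
      · rw [min_eq_left hv]; exact min_le_left _ _
      · rw [min_eq_right hv]
        exact le_trans (min_le_right _ _) (Nat.le_mul_of_pos_right k hz)
  have h2 : ∀ i, min (v i) k * a i ≤ v i * a i :=
    fun i => Nat.mul_le_mul_right _ (min_le_left _ _)
  have hlow : min (∑ i, v i * a i) k = min (∑ i, min (v i * a i) k) k :=
    cap_sum k (fun i => v i * a i) Finset.univ
  have hA : (∑ i, min (v i * a i) k) ≤ ∑ i, min (v i) k * a i :=
    Finset.sum_le_sum fun i _ => h1 i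
  have hB : (∑ i, min (v i) k * a i) ≤ ∑ i, v i * a i :=
    Finset.sum_le_sum fun i _ => h2 i
  omega

lemma sing_dot {Q : Type} [Fintype Q] [DecidableEq Q] (q : Q) (F : Q → ℕ) :
    (∑ p, (if p = q then 1 else 0) * F p) = F q := by
  simp [ite_mul, Finset.sum_ite_eq']

lemma infa2_comp_cap {α : Type} [Fintype α] (h : ℕ → ℕ) (k : ℕ)
    (hc : ∀ m, k ≤ m → h m = h k) {f : List α → ℕ} (hf : InFA2 f) :
    InFA2 (fun w => h (f w)) := by
  classical
  obtain ⟨I, _, _, A, a, b, hab⟩ := hf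
  let Q := I → Fin (k + 1)
  let capv : (I → ℕ) → Q := fun v i => ⟨min (v i) k, Nat.lt_succ_of_le (min_le_right _ _)⟩
  let step : α → Q → Q := fun σ q => capv ((fun i => (q i : ℕ)) ᵥ* A σ)
  let M : α → Matrix Q Q ℕ := fun σ => Matrix.of fun q q' => if q' = step σ q then 1 else 0
  let sing : Q → Q → ℕ := fun q q' => if q' = q then 1 else 0
  let F : Q → ℕ := fun q => h (min ((fun i => (q i : ℕ)) ⬝ᵥ b) k)
  have hcapdot : ∀ (v u : I → ℕ),
      min ((fun i => ((capv v i : ℕ))) ⬝ᵥ u) k = min (v ⬝ᵥ u) k := by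
    intro v u
    exact cap_dot_s8 k v u
  have hcap : ∀ (v : I → ℕ) (σ : α), step σ (capv v) = capv (v ᵥ* A σ) := by
    intro v σ
    funext j
    apply Fin.ext
    show min ((fun i => ((capv v i : ℕ))) ⬝ᵥ (fun i => A σ i j)) k
      = min (v ⬝ᵥ (fun i => A σ i j)) k
    exact hcapdot v _
  have hstep : ∀ (q : Q) (σ : α), (sing q) ᵥ* (M σ) = sing (step σ q) := by
    intro q σ
    funext q'
    show (∑ p, (if p = q then 1 else 0) * M σ p q') = sing (step σ q) q'
    rw [sing_dot q (fun p => M σ p q')]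
    rfl
  have hrun : ∀ (w : List α) (q : Q), sing q ⬝ᵥ ((List.map M w).prod *ᵥ F)
      = F (w.foldl (fun q σ => step σ q) q) := by
    intro w
    induction w with
    | nil =>
      intro q
      show (∑ p, (if p = q then 1 else 0) * ((1 : Matrix Q Q ℕ) *ᵥ F) p) = F q
      rw [sing_dot q]
      rw [Matrix.one_mulVec]
    | cons σ w ih =>
      intro q
      rw [List.map_cons, List.prod_cons, ← Matrix.mulVec_mulVec,
        Matrix.dotProduct_mulVec, hstep q σ, List.foldl_cons]
      exact ih (step σ q)
  have hstate : ∀ (w : List α) (v : I → ℕ),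
      w.foldl (fun q σ => step σ q) (capv v) = capv (v ᵥ* (List.map A w).prod) := by
    intro w
    induction w with
    | nil => intro v; simp [Matrix.vecMul_one]
    | cons σ w ih =>
      intro v
      rw [List.foldl_cons, hcap v σ, ih (v ᵥ* A σ), List.map_cons, List.prod_cons,
        ← Matrix.vecMul_vecMul]
  refine ⟨Q, inferInstance, inferInstance, M, sing (capv a), F, ?_⟩
  intro w
  show h (f w) = sing (capv a) ⬝ᵥ ((List.map M w).prod *ᵥ F)
  rw [hrun w (capv a), hstate w a, hab w, Matrix.dotProduct_mulVec]
  show h ((a ᵥ* (List.map A w).prod) ⬝ᵥ b)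
    = h (min ((fun i => ((capv (a ᵥ* (List.map A w).prod) i : ℕ))) ⬝ᵥ b) k)
  rw [hcapdot (a ᵥ* (List.map A w).prod) b]
  rcases le_total ((a ᵥ* (List.map A w).prod) ⬝ᵥ b) k with h1 | h1
  · rw [min_eq_left h1]
  · rw [min_eq_right h1, hc _ h1]

/-- closure properties are stable under changing finitely many values. -/
theorem closureProp_of_eventually_eq (φ ψ : ℕ → ℕ)
    (hφ : ClosureProp φ) (h : {n : ℕ | ψ n ≠ φ n}.Finite) :
    ClosureProp ψ := by
  intro α _ f hf
  obtain ⟨N, hN⟩ : ∃ N, ∀ m, N ≤ m → ψ m = φ m := by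
    obtain ⟨N, hN⟩ := h.bddAbove
    refine ⟨N + 1, fun m hm => ?_⟩
    by_contra hne
    exact absurd (hN (show m ∈ {n : ℕ | ψ n ≠ φ n} from hne)) (by omega)
  have hφf : InFA2 (fun w => φ (f w)) := infa2_of_infa (hφ α f hf)
  have hg : InFA2 (fun w => (if f w < N then 0 else 1)) := by
    have := infa2_comp_cap (fun m => if m < N then 0 else 1) N
      (fun m hm => by simp [Nat.not_lt.mpr hm]) (infa2_of_infa hf)
    exact this
  have hh : InFA2 (fun w => (if f w < N then ψ (f w) else 0)) := by
    have := infa2_comp_cap (fun m => if m < N then ψ m else 0) N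
      (fun m hm => by simp [Nat.not_lt.mpr hm]) (infa2_of_infa hf)
    -- `this : InFA2 (fun w => if f w < N then ψ (f w) else 0)` up to beta
    exact this
  have hkey : (ψ ∘ f) = fun w =>
      (if f w < N then ψ (f w) else 0) + φ (f w) * (if f w < N then 0 else 1) := by
    funext w
    by_cases hlt : f w < N
    · simp [hlt]
    · simp [hlt, hN _ (Nat.not_lt.mp hlt)]
  rw [hkey]
  exact infa_of_infa2 (infa2_add hh (infa2_mul hφf hg))
end

section
/- Let r ∈ ℕ, and let φ ∈ ℚ[x] be given by φ(x) = Σ_{i=0}^{r} a_i · C(x, i) where each a_i ∈ ℤ and a_r > 0. Then there exist b_0, …, b_r ∈ ℕ and c_0, …, c_r ∈ ℕ such that, as polynomials in ℚ[x], φ(x) = Σ_{i=0}^{r} b_i · C(x − c_i, i). -/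
open Polynomial

/-- The binomial polynomial `C(x, c) = x(x−1)⋯(x−c+1)/c! ∈ ℚ[x]`. -/
noncomputable def binPoly (c : ℕ) : Polynomial ℚ :=
  Polynomial.C ((Nat.factorial c : ℚ)⁻¹) * descPochhammer ℚ c

lemma binPoly_eval_nat (i n : ℕ) : (binPoly i).eval (n : ℚ) = n.choose i := by
  rw [binPoly, eval_mul, eval_C, descPochhammer_eval_eq_descFactorial,
    Nat.descFactorial_eq_factorial_mul_choose]
  push_cast
  rw [inv_mul_eq_div, mul_comm, mul_div_assoc, div_self (by exact_mod_cast i.factorial_ne_zero),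
    mul_one]

lemma binPoly_vandermonde (i c : ℕ) :
    binPoly i = ∑ j ∈ Finset.range (i + 1),
      ((c.choose (i - j) : ℚ)) • (binPoly j).comp (X - Polynomial.C (c : ℚ)) := by
  apply Polynomial.eq_of_infinite_eval_eq
  apply Set.Infinite.mono (s := (fun m : ℕ => ((m + c : ℕ) : ℚ)) '' Set.univ)
  · rintro x ⟨m, -, rfl⟩
    simp only [Set.mem_setOf_eq, eval_finset_sum, eval_smul, smul_eq_mul, eval_comp, eval_sub,
      eval_X, eval_C, binPoly_eval_nat]
    have h1 : ((m + c : ℕ) : ℚ) - (c : ℚ) = ((m : ℕ) : ℚ) := by push_cast; ring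
    rw [h1]
    simp only [binPoly_eval_nat]
    rw [show m + c = c + m by ring, Nat.add_choose_eq]
    rw [Finset.Nat.sum_antidiagonal_eq_sum_range_succ (f := fun a b => (c.choose a * m.choose b : ℕ))]
    push_cast
    rw [← Finset.sum_range_reflect]
    apply Finset.sum_congr rfl
    intro j hj
    simp only [Finset.mem_range] at hj
    have e1 : i.succ - 1 - j = i - j := by omega
    have e2 : i - (i - j) = j := by omega
    rw [e1, e2]
  · apply Set.Infinite.image
    · intro x _ y _ h
      simp only at h
      have : x + c = y + c := by exact_mod_cast h
      omega
    · exact Set.infinite_univ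

lemma choose_mono_half {n k m : ℕ} (hkm : k ≤ m) (hm : m ≤ n / 2) :
    n.choose k ≤ n.choose m := by
  induction m with
  | zero => simp [Nat.le_zero.mp hkm]
  | succ m ih =>
    rcases Nat.eq_or_lt_of_le hkm with rfl | h
    · exact le_refl _
    · exact (ih (by omega) (by omega)).trans
        (Nat.choose_le_succ_of_lt_half_left (by omega))

lemma key_nonneg (r : ℕ) (a' : ℕ → ℤ) (har : 1 ≤ a' r)
    (j : ℕ) (hj : j ≤ r) :
    0 ≤ ∑ i ∈ Finset.Icc j r,
      a' i * ((2 * ((∑ i ∈ Finset.range (r+1), (a' i).natAbs) + 1) * (r+1)).choose (i - j)) := by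
  set M : ℕ := ∑ i ∈ Finset.range (r+1), (a' i).natAbs with hM
  set c : ℕ := 2 * (M + 1) * (r + 1) with hc
  have hchalf : c / 2 = (M + 1) * (r + 1) := by
    rw [hc, mul_assoc]; exact Nat.mul_div_cancel_left _ (by norm_num)
  rcases Nat.eq_or_lt_of_le hj with rfl | hjr
  · rw [Finset.Icc_self, Finset.sum_singleton, Nat.sub_self, Nat.choose_zero_right]
    simpa using le_trans (by norm_num) har
  · obtain ⟨s, rfl⟩ : ∃ s, r = s + 1 := ⟨r - 1, by omega⟩
    have hjs : j ≤ s := by omega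
    rw [Finset.sum_Icc_succ_top (by omega)]
    -- Bound 1 : lower part ≥ -(M * choose c (s - j))
    have hb1 : -((M : ℤ) * (c.choose (s - j))) ≤
        ∑ i ∈ Finset.Icc j s, a' i * (c.choose (i - j)) := by
      have step : ∀ i ∈ Finset.Icc j s,
          -(((a' i).natAbs : ℤ) * (c.choose (s - j))) ≤ a' i * (c.choose (i - j)) := by
        intro i hi
        simp only [Finset.mem_Icc] at hi
        have hmono : (c.choose (i - j) : ℤ) ≤ (c.choose (s - j) : ℤ) := by
          exact_mod_cast choose_mono_half (by omega) (by
            rw [hchalf]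
            have h1 : s - j ≤ s := Nat.sub_le s j
            have h2 : s + 1 + 1 ≤ (M + 1) * (s + 1 + 1) := Nat.le_mul_of_pos_left _ (by omega)
            omega)
        have h1 : -(((a' i).natAbs : ℤ) * (c.choose (s - j))) ≤
            -(((a' i).natAbs : ℤ) * (c.choose (i - j))) := by
          apply neg_le_neg
          exact mul_le_mul_of_nonneg_left hmono (by positivity)
        refine h1.trans ?_
        rw [neg_mul_eq_neg_mul]
        exact mul_le_mul_of_nonneg_right (by simpa using neg_abs_le (a' i)) (by positivity)
      calc -((M : ℤ) * (c.choose (s - j)))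
          ≤ ∑ i ∈ Finset.Icc j s, -(((a' i).natAbs : ℤ) * (c.choose (s - j))) := by
            rw [show (∑ i ∈ Finset.Icc j s, -(((a' i).natAbs : ℤ) * (c.choose (s - j)))) =
              -((∑ i ∈ Finset.Icc j s, ((a' i).natAbs : ℤ)) * (c.choose (s - j))) by
                rw [Finset.sum_mul, ← Finset.sum_neg_distrib]]
            apply neg_le_neg
            apply mul_le_mul_of_nonneg_right _ (by positivity)
            have hsub : Finset.Icc j s ⊆ Finset.range (s + 1 + 1) := by
              intro x hx; simp only [Finset.mem_Icc] at hx; simp; omega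
            exact_mod_cast Nat.cast_le.mpr <|
              Finset.sum_le_sum_of_subset_of_nonneg hsub (fun _ _ _ => Nat.zero_le _)
        _ ≤ _ := Finset.sum_le_sum step
    -- Bound 2 : M * choose c (s - j) ≤ a' (s+1) * choose c (s + 1 - j)
    have hb2 : (M : ℤ) * (c.choose (s - j)) ≤ a' (s + 1) * (c.choose (s + 1 - j)) := by
      have hk : s + 1 - j = (s - j) + 1 := by omega
      have hnat : M * c.choose (s - j) ≤ c.choose ((s - j) + 1) := by
        set k := s - j with hkdef
        have hmul : c.choose (k + 1) * (k + 1) = c.choose k * (c - k) := Nat.choose_succ_right_eq c k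
        have hck : M * (k + 1) + k ≤ c := by
          have hks : k ≤ s := Nat.sub_le s j
          have h2 : M * (k + 1) ≤ M * (s + 1) := Nat.mul_le_mul_left M (by omega)
          have h3 : 2 * (M + 1) * (s + 1 + 1) = M * (s + 1) + (M * (s + 3) + 2 * s + 4) := by ring
          omega
        have : M * c.choose k * (k + 1) ≤ c.choose (k + 1) * (k + 1) := by
          rw [hmul]
          calc M * c.choose k * (k + 1) = c.choose k * (M * (k + 1)) := by ring
          _ ≤ c.choose k * (c - k) := Nat.mul_le_mul_left _ (by omega)
        exact Nat.le_of_mul_le_mul_right this (by omega)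
      calc (M : ℤ) * (c.choose (s - j)) ≤ (c.choose (s + 1 - j) : ℤ) := by
            rw [hk]; exact_mod_cast hnat
        _ ≤ a' (s + 1) * (c.choose (s + 1 - j)) :=
            le_mul_of_one_le_left (by positivity) har
    linarith

/-- a polynomial with integer coefficients in the binomial basis whose
leading coefficient is positive can be rewritten as a nonnegative integer combination
of shifted binomial polynomials `C(x − cᵢ, i)`. -/
theorem shifted_binomial_basis (r : ℕ) (a : Fin (r + 1) → ℤ)
    (ha : 0 < a (Fin.last r)) :
    ∃ (b c : Fin (r + 1) → ℕ),
      (∑ i : Fin (r + 1), (a i : ℚ) • binPoly (i : ℕ)) =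
        ∑ i : Fin (r + 1), (b i : ℚ) •
          (binPoly (i : ℕ)).comp (Polynomial.X - Polynomial.C ((c i : ℕ) : ℚ)) := by
  classical
  set a' : ℕ → ℤ := fun n => if h : n < r + 1 then a ⟨n, h⟩ else 0 with ha'
  have har : 1 ≤ a' r := by
    have : a' r = a (Fin.last r) := by simp [ha', Fin.last]
    omega
  set c : ℕ := 2 * ((∑ i ∈ Finset.range (r+1), (a' i).natAbs) + 1) * (r+1) with hc
  set B : ℕ → ℤ := fun j => ∑ i ∈ Finset.Icc j r, a' i * (c.choose (i - j)) with hB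
  have hBnn : ∀ j ≤ r, 0 ≤ B j := fun j hj => key_nonneg r a' har j hj
  refine ⟨fun j => (B j).toNat, fun _ => c, ?_⟩
  have lhs_eq : (∑ i : Fin (r + 1), (a i : ℚ) • binPoly (i : ℕ)) =
      ∑ i ∈ Finset.range (r + 1), (a' i : ℚ) • binPoly i := by
    rw [← Fin.sum_univ_eq_sum_range (fun n => (a' n : ℚ) • binPoly n)]
    apply Finset.sum_congr rfl
    intro i _
    congr 2
    simp [ha', i.isLt]
    exact fun h => absurd i.isLt (by omega)
  have rhs_eq : (∑ i : Fin (r + 1), (((B i).toNat : ℚ)) •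
        (binPoly (i : ℕ)).comp (Polynomial.X - Polynomial.C ((c : ℕ) : ℚ))) =
      ∑ j ∈ Finset.range (r + 1), ((B j : ℚ)) •
        (binPoly j).comp (Polynomial.X - Polynomial.C ((c : ℕ) : ℚ)) := by
    rw [Fin.sum_univ_eq_sum_range (fun n => (((B n).toNat : ℚ)) •
        (binPoly n).comp (Polynomial.X - Polynomial.C ((c : ℕ) : ℚ)))]
    apply Finset.sum_congr rfl
    intro j hj
    simp only [Finset.mem_range] at hj
    congr 1
    exact_mod_cast Int.toNat_of_nonneg (hBnn j (by omega))
  rw [lhs_eq, rhs_eq]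
  calc ∑ i ∈ Finset.range (r + 1), (a' i : ℚ) • binPoly i
      = ∑ i ∈ Finset.range (r + 1), ∑ j ∈ Finset.range (i + 1),
          ((a' i : ℚ) * (c.choose (i - j) : ℚ)) •
            (binPoly j).comp (X - Polynomial.C (c : ℚ)) := by
        apply Finset.sum_congr rfl
        intro i _
        rw [binPoly_vandermonde i c, Finset.smul_sum]
        simp [smul_smul]
    _ = ∑ j ∈ Finset.range (r + 1), ∑ i ∈ Finset.Icc j r,
          ((a' i : ℚ) * (c.choose (i - j) : ℚ)) •
            (binPoly j).comp (X - Polynomial.C (c : ℚ)) := by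
        apply Finset.sum_comm'
        intro i j
        simp only [Finset.mem_range, Finset.mem_Icc]
        omega
    _ = ∑ j ∈ Finset.range (r + 1), ((B j : ℚ)) •
          (binPoly j).comp (Polynomial.X - Polynomial.C ((c : ℕ) : ℚ)) := by
        apply Finset.sum_congr rfl
        intro j _
        rw [← Finset.sum_smul]
        congr 1
        rw [hB]
        push_cast
        rfl
end

section
/- Let Σ be a finite alphabet, let f : List Σ → ℕ be in #FA, and let φ ∈ ℚ[x] be an integer-valued polynomial (i.e., φ(k) ∈ ℤ for every k ∈ ℤ). Then the function w ↦ max(φ(f(w)), 0), viewed as a function List Σ → ℕ, is in #FA. -/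
set_option linter.unusedSectionVars false


open Polynomial

namespace FAProof

variable {α : Type} [Fintype α]

/-- restatement of InFA via vecMul -/
theorem inFA_iff (f : List α → ℕ) : InFA f ↔
    ∃ (n : ℕ) (A : α → Matrix (Fin n) (Fin n) ℕ) (a b : Fin n → ℕ),
      ∀ w : List α, f w = dotProduct (Matrix.vecMul a (List.prod (List.map A w))) b := by
  unfold InFA
  refine exists_congr fun n => exists_congr fun A => exists_congr fun a => exists_congr fun b =>
    forall_congr' fun w => ?_
  rw [Matrix.dotProduct_mulVec]

/-- InFA from an automaton over an arbitrary fintype index -/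
theorem inFA_of_index {ι : Type} [Fintype ι] [DecidableEq ι] (f : List α → ℕ)
    (A : α → Matrix ι ι ℕ) (a b : ι → ℕ)
    (h : ∀ w : List α, f w = dotProduct (Matrix.vecMul a (List.prod (List.map A w))) b) :
    InFA f := by
  classical
  rw [inFA_iff]
  obtain e := Fintype.equivFin ι
  refine ⟨Fintype.card ι, fun σ => (A σ).submatrix e.symm e.symm, a ∘ e.symm, b ∘ e.symm,
    fun w => ?_⟩
  have hprod : ∀ w : List α,
      List.prod (List.map (fun σ => (A σ).submatrix e.symm e.symm) w)
        = (List.prod (List.map A w)).submatrix e.symm e.symm := by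
    intro w
    induction w with
    | nil => simp [Matrix.submatrix_one_equiv e.symm]
    | cons σ w ih => simp [ih, Matrix.submatrix_mul_equiv]
  rw [h w, hprod]
  rw [dotProduct, dotProduct]
  rw [← Equiv.sum_comp e.symm (fun i => Matrix.vecMul a (List.prod (List.map A w)) i * b i)]
  refine Finset.sum_congr rfl fun i _ => ?_
  congr 1
  simp [Matrix.vecMul, dotProduct, Matrix.submatrix]
  rw [← Equiv.sum_comp e.symm (fun j => a j * (List.prod (List.map A w)) j (e.symm i))]

theorem inFA_const (c : ℕ) : InFA (fun _ : List α => c) := by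
  refine inFA_of_index _ (fun _ => (1 : Matrix (Fin 1) (Fin 1) ℕ)) (fun _ => c) (fun _ => 1)
    fun w => ?_
  have : List.prod (List.map (fun _ : α => (1 : Matrix (Fin 1) (Fin 1) ℕ)) w) = 1 := by
    induction w with
    | nil => rfl
    | cons σ w ih => simp [ih]
  simp [this, dotProduct]

theorem inFA_add {f g : List α → ℕ} (hf : InFA f) (hg : InFA g) :
    InFA (fun w => f w + g w) := by
  classical
  rw [inFA_iff] at hf hg
  obtain ⟨n, A, a, b, ha⟩ := hf
  obtain ⟨m, B, c, d, hb⟩ := hg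
  refine inFA_of_index _
    (fun σ => Matrix.fromBlocks (A σ) 0 0 (B σ)) (Sum.elim a c) (Sum.elim b d) fun w => ?_
  have hprod : ∀ w : List α,
      List.prod (List.map (fun σ => Matrix.fromBlocks (A σ) 0 0 (B σ)) w)
        = Matrix.fromBlocks (List.prod (List.map A w)) 0 0 (List.prod (List.map B w)) := by
    intro w
    induction w with
    | nil => simp [← Matrix.fromBlocks_one]
    | cons σ w ih => simp [ih, Matrix.fromBlocks_multiply]
  rw [ha w, hb w, hprod, Matrix.vecMul_fromBlocks]
  simp only [Sum.elim_comp_inl, Sum.elim_comp_inr]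
  simp only [Matrix.vecMul_zero, add_zero, zero_add]
  rw [sumElim_dotProduct_sumElim]

theorem inFA_smul {f : List α → ℕ} (hf : InFA f) (c : ℕ) :
    InFA (fun w => c * f w) := by
  rw [inFA_iff] at hf ⊢
  obtain ⟨n, A, a, b, ha⟩ := hf
  exact ⟨n, A, a, fun i => c * b i, fun w => by
    rw [ha w, dotProduct, dotProduct, Finset.mul_sum]
    exact Finset.sum_congr rfl fun i _ => by ring⟩

theorem inFA_sum {β : Type*} (s : Finset β) (F : β → List α → ℕ)
    (h : ∀ i ∈ s, InFA (F i)) : InFA (fun w => ∑ i ∈ s, F i w) := by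
  classical
  induction s using Finset.induction with
  | empty => simpa using inFA_const (α := α) 0
  | insert x s hx ih =>
    simp only [Finset.sum_insert hx]
    exact inFA_add (h x (Finset.mem_insert_self x s))
      (ih fun i hi => h i (Finset.mem_insert_of_mem hi))

/-- DFA with output: the function w ↦ out (foldl step q0 w) is InFA. -/
theorem inFA_dfa {Q : Type} [Fintype Q] [DecidableEq Q] (q0 : Q) (step : Q → α → Q)
    (out : Q → ℕ) : InFA (fun w => out (w.foldl step q0)) := by
  classical
  refine inFA_of_index _ (fun σ => Matrix.of fun q q' => if step q σ = q' then 1 else 0)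
    (fun q => if q = q0 then 1 else 0) out fun w => ?_
  have key : ∀ w : List α, Matrix.vecMul (fun q => if q = q0 then (1:ℕ) else 0)
      (List.prod (List.map (fun σ => Matrix.of fun q q' => if step q σ = q' then (1:ℕ) else 0) w))
      = fun q => if q = w.foldl step q0 then 1 else 0 := by
    intro w
    induction w using List.reverseRecOn with
    | nil => simp [Matrix.vecMul_one]; funext x; exact if_congr Iff.rfl rfl rfl
    | append_singleton w σ ih =>
      rw [List.map_append, List.prod_append, List.map_singleton, List.prod_singleton,
        ← Matrix.vecMul_vecMul, ih]
      funext q'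
      rw [Matrix.vecMul, dotProduct]
      rw [List.foldl_append]
      simp only [List.foldl_cons, List.foldl_nil]
      rw [Finset.sum_eq_single (w.foldl step q0)]
      · simp [Matrix.of_apply, eq_comm]; exact if_congr Iff.rfl rfl rfl
      · intro q hq hne; simp [hne]
      · intro h; exact absurd (Finset.mem_univ _) h
  rw [key, dotProduct]
  rw [Finset.sum_eq_single (w.foldl step q0)]
  · simp
  · intro q hq hne; simp [hne]
  · intro h; exact absurd (Finset.mem_univ _) h

end FAProof

namespace FAProof2

variable {ι : Type} [Fintype ι] [DecidableEq ι]

/-- capping a vector at N -/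
def capf (N : ℕ) (v : ι → ℕ) : ι → Fin (N + 1) :=
  fun i => ⟨min (v i) N, Nat.lt_succ_of_le (min_le_right _ _)⟩

theorem cap_commute (N : ℕ) (x c : ι → ℕ) :
    min (∑ i, min (x i) N * c i) N = min (∑ i, x i * c i) N := by
  by_cases h : ∃ i, N ≤ x i ∧ 1 ≤ c i
  · obtain ⟨i0, hxi, hci⟩ := h
    have h1 : N ≤ ∑ i, min (x i) N * c i := by
      calc N = min (x i0) N * 1 := by rw [min_eq_right hxi, mul_one]
      _ ≤ min (x i0) N * c i0 := Nat.mul_le_mul_left _ hci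
      _ ≤ ∑ i, min (x i) N * c i :=
        Finset.single_le_sum (f := fun i => min (x i) N * c i) (fun i _ => Nat.zero_le _) (Finset.mem_univ i0)
    have h2 : N ≤ ∑ i, x i * c i := by
      calc N = N * 1 := (mul_one N).symm
      _ ≤ x i0 * c i0 := Nat.mul_le_mul hxi hci
      _ ≤ ∑ i, x i * c i := Finset.single_le_sum (f := fun i => x i * c i) (fun i _ => Nat.zero_le _) (Finset.mem_univ i0)
    rw [min_eq_right h1, min_eq_right h2]
  · push_neg at h
    congr 1
    refine Finset.sum_congr rfl fun i _ => ?_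
    by_cases hx : N ≤ x i
    · have : c i = 0 := by have := h i hx; omega
      simp [this]
    · rw [min_eq_left (by omega)]

theorem capf_eq_iff (N : ℕ) (u : ι → ℕ) (q : ι → Fin (N+1)) :
    capf N u = q ↔ ∀ i, min (u i) N = (q i : ℕ) := by
  constructor
  · intro h i; rw [← h]; rfl
  · intro h; funext i; exact Fin.ext (h i)

/-- one deterministic cap step -/
def capStep {α : Type} (N : ℕ) (A : α → Matrix ι ι ℕ) (q : ι → Fin (N+1)) (σ : α) :
    ι → Fin (N + 1) :=
  capf N (fun j => ∑ i, (q i : ℕ) * A σ i j)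

theorem capStep_capf {α : Type} (N : ℕ) (A : α → Matrix ι ι ℕ) (v : ι → ℕ) (σ : α) :
    capStep N A (capf N v) σ = capf N (Matrix.vecMul v (A σ)) := by
  funext j
  refine Fin.ext ?_
  show min (∑ i, min (v i) N * A σ i j) N = min (Matrix.vecMul v (A σ) j) N
  rw [cap_commute]
  congr 1

theorem capf_foldl {α : Type} (N : ℕ) (A : α → Matrix ι ι ℕ) (a : ι → ℕ) (w : List α) :
    w.foldl (capStep N A) (capf N a) = capf N (Matrix.vecMul a (List.prod (List.map A w))) := by
  induction w using List.reverseRecOn with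
  | nil => simp [Matrix.vecMul_one]
  | append_singleton w σ ih =>
    rw [List.foldl_append, List.foldl_cons, List.foldl_nil, ih, capStep_capf,
      List.map_append, List.prod_append, List.map_singleton, List.prod_singleton,
      Matrix.vecMul_vecMul]

/-- dot products against capped vectors -/
theorem cap_dot (N : ℕ) (u b : ι → ℕ) (q : ι → Fin (N+1)) (hq : capf N u = q) :
    min (∑ i, (q i : ℕ) * b i) N = min (∑ i, u i * b i) N := by
  rw [capf_eq_iff] at hq
  have : ∀ i, (q i : ℕ) = min (u i) N := fun i => (hq i).symm
  calc min (∑ i, (q i : ℕ) * b i) N = min (∑ i, min (u i) N * b i) N := by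
        congr 1; exact Finset.sum_congr rfl fun i _ => by rw [this]
  _ = min (∑ i, u i * b i) N := cap_commute N u b

end FAProof2

namespace FAProof2

section Monus
variable {α : Type} [Fintype α] {ι : Type} [Fintype ι] [DecidableEq ι]

/-- coordinate functions for the monus automaton -/
def valC (N : ℕ) (u : ι → ℕ) : Option (ι ⊕ ι) → ℕ
  | none => 1
  | some (Sum.inl i) => u i
  | some (Sum.inr i) => u i - N

def lowSet (N : ℕ) (q : ι → Fin (N+1)) (c : ι → ℕ) : Finset ι :=
  Finset.univ.filter (fun i => (q i : ℕ) = N ∧ 1 ≤ c i)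

/-- coefficients expressing `(u ⬝ c) ∸ N` in terms of the coordinates, given cap profile q -/
noncomputable def coeffN (N : ℕ) (q : ι → Fin (N+1)) (c : ι → ℕ) : Option (ι ⊕ ι) → ℕ := fun x =>
  if h : (lowSet N q c).Nonempty then
    match x with
    | none => 0
    | some (Sum.inl i) => c i - (if i = h.choose then 1 else 0)
    | some (Sum.inr i) => if i = h.choose then 1 else 0
  else
    match x with
    | none => (∑ i, (q i : ℕ) * c i) - N
    | some _ => 0

theorem coeffN_spec (N : ℕ) (q : ι → Fin (N+1)) (c : ι → ℕ) (u : ι → ℕ)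
    (hq : capf N u = q) :
    (∑ i, u i * c i) - N = ∑ x : Option (ι ⊕ ι), coeffN N q c x * valC N u x := by
  rw [capf_eq_iff] at hq
  rw [Fintype.sum_option, Fintype.sum_sum_type]
  by_cases h : (lowSet N q c).Nonempty
  · set i0 := h.choose with hi0
    have hmem : i0 ∈ lowSet N q c := h.choose_spec
    rw [lowSet, Finset.mem_filter] at hmem
    obtain ⟨-, hqi0, hci0⟩ := hmem
    have hui0 : N ≤ u i0 := by have := hq i0; omega
    simp only [coeffN, dif_pos h, valC, ← hi0]
    -- RHS = 0 + ∑ i, (c i - δ) * u i + ∑ i, δ * (u i - N)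
    have hs2 : ∑ i, (if i = i0 then (1:ℕ) else 0) * (u i - N) = u i0 - N := by
      rw [Finset.sum_eq_single i0]
      · simp
      · intro i _ hne; simp [hne]
      · intro hn; exact absurd (Finset.mem_univ _) hn
    have hdel : ∑ i, (if i = i0 then (1:ℕ) else 0) * u i = u i0 := by
      rw [Finset.sum_eq_single i0]
      · simp
      · intro i _ hne; simp [hne]
      · intro hn; exact absurd (Finset.mem_univ _) hn
    have hs1' : (∑ i, (c i - (if i = i0 then 1 else 0)) * u i) + u i0 = ∑ i, c i * u i := by
      conv_lhs => rw [← hdel]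
      rw [← Finset.sum_add_distrib]
      refine Finset.sum_congr rfl fun i _ => ?_
      by_cases hi : i = i0
      · subst hi
        rw [if_pos rfl, Nat.sub_mul, one_mul]
        have : u i0 ≤ c i0 * u i0 := Nat.le_mul_of_pos_left _ hci0
        omega
      · simp [hi]
    rw [hs2]
    have hle : u i0 ≤ ∑ i, c i * u i := by
      calc u i0 ≤ c i0 * u i0 := Nat.le_mul_of_pos_left _ hci0
      _ ≤ ∑ i, c i * u i :=
        Finset.single_le_sum (f := fun i => c i * u i) (fun i _ => Nat.zero_le _)
          (Finset.mem_univ i0)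
    have hsum_eq : ∑ i, u i * c i = ∑ i, c i * u i :=
      Finset.sum_congr rfl fun i _ => Nat.mul_comm _ _
    rw [hsum_eq]
    omega
  · simp only [coeffN, dif_neg h, valC]
    have hempty : ∀ i, (q i : ℕ) = N → c i = 0 := by
      intro i hqi
      by_contra hc
      exact h ⟨i, by rw [lowSet, Finset.mem_filter]; exact ⟨Finset.mem_univ _, hqi, by omega⟩⟩
    have hsum : ∑ i, (q i : ℕ) * c i = ∑ i, u i * c i := by
      refine Finset.sum_congr rfl fun i _ => ?_
      by_cases hqi : (q i : ℕ) = N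
      · rw [hqi, hempty i hqi, mul_zero, mul_zero]
      · have := hq i
        have : u i = (q i : ℕ) := by omega
        rw [this]
    rw [hsum]
    simp

/-- transition coefficients for the monus automaton -/
noncomputable def transCoeff (N : ℕ) (A : α → Matrix ι ι ℕ) (q : ι → Fin (N+1)) (σ : α) :
    Option (ι ⊕ ι) → Option (ι ⊕ ι) → ℕ := fun x x' =>
  match x' with
  | none => (match x with | none => 1 | _ => 0)
  | some (Sum.inl j) => (match x with | some (Sum.inl i) => A σ i j | _ => 0)
  | some (Sum.inr j) => coeffN N q (fun i => A σ i j) x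

theorem transCoeff_spec (N : ℕ) (A : α → Matrix ι ι ℕ) (q : ι → Fin (N+1)) (σ : α)
    (u : ι → ℕ) (hq : capf N u = q) (x' : Option (ι ⊕ ι)) :
    valC N (Matrix.vecMul u (A σ)) x' = ∑ x : Option (ι ⊕ ι), transCoeff N A q σ x x' * valC N u x := by
  have hvm : ∀ j, Matrix.vecMul u (A σ) j = ∑ i, u i * A σ i j := by
    intro j; simp [Matrix.vecMul, dotProduct]
  match x' with
  | none =>
    simp only [transCoeff, valC, Fintype.sum_option, Fintype.sum_sum_type]
    simp [valC]
  | some (Sum.inl j) =>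
    simp only [transCoeff, valC, Fintype.sum_option, Fintype.sum_sum_type]
    simp only [zero_mul, mul_zero, Finset.sum_const_zero, add_zero, zero_add, mul_one]
    rw [hvm j]
    exact Finset.sum_congr rfl fun i _ => Nat.mul_comm _ _
  | some (Sum.inr j) =>
    show Matrix.vecMul u (A σ) j - N = _
    rw [hvm j]
    exact coeffN_spec N q (fun i => A σ i j) u hq

end Monus
end FAProof2

namespace FAProof2

section Closure
variable {α : Type} [Fintype α]

theorem inFA_table {f : List α → ℕ} (hf : InFA f) (N : ℕ) (t : ℕ → ℕ)
    (ht : ∀ m, N ≤ m → t m = t N) : InFA (fun w => t (f w)) := by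
  classical
  rw [FAProof.inFA_iff] at hf
  obtain ⟨n, A, a, b, hfa⟩ := hf
  set out : (Fin n → Fin (N+1)) → ℕ := fun q => t (min (∑ i, (q i : ℕ) * b i) N) with hout
  have key : ∀ w : List α, t (f w) = out (w.foldl (capStep N A) (capf N a)) := by
    intro w
    rw [capf_foldl, hout]
    simp only
    rw [cap_dot N _ b _ rfl]
    have hfw : f w = ∑ i, Matrix.vecMul a (List.prod (List.map A w)) i * b i := by
      rw [hfa w]; rfl
    rw [← hfw]
    rcases le_or_gt N (f w) with h | h
    · rw [min_eq_right h, ht (f w) h]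
    · rw [min_eq_left (le_of_lt h)]
  have h2 := FAProof.inFA_dfa (α := α) (capf N a) (capStep N A) out
  have heq : (fun w => t (f w)) = fun w : List α => out (w.foldl (capStep N A) (capf N a)) :=
    funext key
  rw [heq]
  exact h2

theorem inFA_monus {f : List α → ℕ} (hf : InFA f) (N : ℕ) : InFA (fun w => f w - N) := by
  classical
  rw [FAProof.inFA_iff] at hf
  obtain ⟨n, A, a, b, hfa⟩ := hf
  set uvec : List α → Fin n → ℕ := fun w => Matrix.vecMul a (List.prod (List.map A w)) with huvec
  set S := ((Fin n → Fin (N+1)) × Option (Fin n ⊕ Fin n)) with hS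
  set T : α → Matrix S S ℕ := fun σ => Matrix.of fun p p' =>
    if capStep N A p.1 σ = p'.1 then transCoeff N A p.1 σ p.2 p'.2 else 0 with hT
  set V : List α → S → ℕ :=
    fun w p => if p.1 = capf N (uvec w) then valC N (uvec w) p.2 else 0 with hV
  have hu_app : ∀ (w : List α) σ, uvec (w ++ [σ]) = Matrix.vecMul (uvec w) (A σ) := by
    intro w σ
    simp [huvec, List.map_append, List.prod_append, Matrix.vecMul_vecMul]
  have collapse : ∀ (w : List α) (g : S → ℕ),
      ∑ p : S, V w p * g p
        = ∑ x : Option (Fin n ⊕ Fin n), valC N (uvec w) x * g (capf N (uvec w), x) := by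
    intro w g
    rw [Fintype.sum_prod_type]
    rw [Finset.sum_eq_single (capf N (uvec w))]
    · refine Finset.sum_congr rfl fun x _ => ?_
      simp [hV]
    · intro q _ hne
      refine Finset.sum_eq_zero fun x _ => ?_
      simp [hV, hne]
    · intro hn; exact absurd (Finset.mem_univ _) hn
  have hinv : ∀ w : List α, Matrix.vecMul (V []) (List.prod (List.map T w)) = V w := by
    intro w
    induction w using List.reverseRecOn with
    | nil => simp [Matrix.vecMul_one]
    | append_singleton w σ ih =>
      rw [List.map_append, List.prod_append, List.map_singleton, List.prod_singleton,
        ← Matrix.vecMul_vecMul, ih]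
      funext p'
      have hvm : Matrix.vecMul (V w) (T σ) p' = ∑ p : S, V w p * T σ p p' := by
        simp [Matrix.vecMul, dotProduct]
      rw [hvm, collapse w (fun p => T σ p p')]
      have hstep : capStep N A (capf N (uvec w)) σ = capf N (uvec (w ++ [σ])) := by
        rw [hu_app w σ]; exact capStep_capf N A (uvec w) σ
      by_cases hcase : p'.1 = capf N (uvec (w ++ [σ]))
      · have hcond : ∀ x, T σ (capf N (uvec w), x) p' = transCoeff N A (capf N (uvec w)) σ x p'.2 := by
          intro x
          simp only [hT, Matrix.of_apply]
          rw [if_pos (by rw [hstep, ← hcase])]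
        have hsum : ∑ x : Option (Fin n ⊕ Fin n),
            valC N (uvec w) x * T σ (capf N (uvec w), x) p'
            = ∑ x : Option (Fin n ⊕ Fin n),
              transCoeff N A (capf N (uvec w)) σ x p'.2 * valC N (uvec w) x :=
          Finset.sum_congr rfl fun x _ => by rw [hcond x, Nat.mul_comm]
        rw [hsum, ← transCoeff_spec N A (capf N (uvec w)) σ (uvec w) rfl p'.2]
        rw [hV]
        simp only
        rw [if_pos hcase, hu_app w σ]
      · have hcond : ∀ x, T σ (capf N (uvec w), x) p' = 0 := by
          intro x
          simp only [hT, Matrix.of_apply]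
          rw [if_neg (by rw [hstep]; exact fun hc => hcase hc.symm)]
        rw [hV]
        simp only
        rw [if_neg hcase]
        refine Finset.sum_eq_zero fun x _ => by rw [hcond x, mul_zero]
  refine FAProof.inFA_of_index _ T (V []) (fun p => coeffN N p.1 b p.2) fun w => ?_
  rw [hinv w]
  have hdot : dotProduct (V w) (fun p => coeffN N p.1 b p.2)
      = ∑ p : S, V w p * coeffN N p.1 b p.2 := rfl
  rw [hdot, collapse w (fun p => coeffN N p.1 b p.2)]
  simp only
  have hsum : ∑ x : Option (Fin n ⊕ Fin n),
      valC N (uvec w) x * coeffN N (capf N (uvec w)) b x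
      = ∑ x : Option (Fin n ⊕ Fin n),
        coeffN N (capf N (uvec w)) b x * valC N (uvec w) x :=
    Finset.sum_congr rfl fun x _ => Nat.mul_comm _ _
  rw [hsum, ← coeffN_spec N (capf N (uvec w)) b (uvec w) rfl]
  have hfw : f w = ∑ i, uvec w i * b i := by rw [hfa w]; rfl
  rw [hfw]

end Closure
end FAProof2

namespace FAProof3

variable {ι : Type} [Fintype ι] [DecidableEq ι]

def slotVal {k : ℕ} (u : ι → ℕ) : Option (ι × Fin k) → ℕ
  | none => 1
  | some im => Nat.choose (u im.1) ((im.2 : ℕ) + 1)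

def degSlot {k : ℕ} : Option (ι × Fin k) → ℕ
  | none => 0
  | some im => (im.2 : ℕ) + 1

def valB (k : ℕ) (u : ι → ℕ) (x : Fin k → Option (ι × Fin k)) : ℕ :=
  ∏ t, slotVal u (x t)

def degB (k : ℕ) (x : Fin k → Option (ι × Fin k)) : ℕ :=
  ∑ t, degSlot (x t)

def InSpan (k : ℕ) (d : ℕ) (F : (ι → ℕ) → ℕ) : Prop :=
  ∃ c : (Fin k → Option (ι × Fin k)) → ℕ,
    (∀ x, c x ≠ 0 → degB k x ≤ d) ∧ ∀ u, F u = ∑ x, c x * valB k u x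

theorem span_congr {k d : ℕ} {F G : (ι → ℕ) → ℕ} (h : ∀ u, F u = G u)
    (hF : InSpan k d F) : InSpan k d G := by
  obtain ⟨c, hc, he⟩ := hF
  exact ⟨c, hc, fun u => (h u).symm.trans (he u)⟩

theorem span_mono {k d d' : ℕ} {F : (ι → ℕ) → ℕ} (hd : d ≤ d') (hF : InSpan k d F) :
    InSpan k d' F := by
  obtain ⟨c, hc, he⟩ := hF
  exact ⟨c, fun x hx => le_trans (hc x hx) hd, he⟩

theorem span_val {k d : ℕ} (x : Fin k → Option (ι × Fin k)) (hx : degB k x ≤ d) :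
    InSpan k d (fun u => valB k u x) := by
  classical
  refine ⟨fun y => if y = x then 1 else 0, fun y hy => ?_, fun u => ?_⟩
  · by_cases h : y = x
    · subst h; exact hx
    · simp [h] at hy
  · rw [Finset.sum_eq_single x]
    · simp
    · intro y _ hne; simp [hne]
    · intro hn; exact absurd (Finset.mem_univ _) hn

theorem span_smul {k d : ℕ} {F : (ι → ℕ) → ℕ} (e : ℕ) (hF : InSpan k d F) :
    InSpan k d (fun u => e * F u) := by
  obtain ⟨c, hc, he⟩ := hF
  refine ⟨fun x => e * c x, fun x hx => hc x (by simp only at hx; intro h; rw [h, mul_zero] at hx; exact hx rfl),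
    fun u => ?_⟩
  simp only
  rw [he u, Finset.mul_sum]
  exact Finset.sum_congr rfl fun x _ => by ring

theorem span_add {k d : ℕ} {F G : (ι → ℕ) → ℕ} (hF : InSpan k d F) (hG : InSpan k d G) :
    InSpan k d (fun u => F u + G u) := by
  obtain ⟨c1, hc1, he1⟩ := hF
  obtain ⟨c2, hc2, he2⟩ := hG
  refine ⟨fun x => c1 x + c2 x, fun x hx => ?_, fun u => ?_⟩
  · simp only at hx
    rcases Nat.eq_zero_or_pos (c1 x) with h | h
    · exact hc2 x (by omega)
    · exact hc1 x (by omega)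
  · simp only
    rw [he1 u, he2 u, ← Finset.sum_add_distrib]
    exact Finset.sum_congr rfl fun x _ => by ring

theorem span_sum {k d : ℕ} {β : Type*} (s : Finset β) (F : β → (ι → ℕ) → ℕ)
    (h : ∀ i ∈ s, InSpan k d (F i)) : InSpan k d (fun u => ∑ i ∈ s, F i u) := by
  classical
  induction s using Finset.induction with
  | empty =>
    refine ⟨fun _ => 0, by simp, fun u => by simp⟩
  | insert x s hx ih =>
    refine span_congr (fun u => (Finset.sum_insert hx).symm) ?_
    exact span_add (h x (Finset.mem_insert_self x s))
      (ih fun i hi => h i (Finset.mem_insert_of_mem hi))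

end FAProof3

namespace FAProof3

variable {ι : Type} [Fintype ι] [DecidableEq ι]

def evalForm (u : ι → ℕ) (F : (ι → ℕ) × ℕ × ℕ) : ℕ :=
  Nat.choose ((∑ i, F.1 i * u i) + F.2.1) F.2.2

def prodForms (u : ι → ℕ) (l : List ((ι → ℕ) × ℕ × ℕ)) : ℕ :=
  (l.map (evalForm u)).prod

def degForms (l : List ((ι → ℕ) × ℕ × ℕ)) : ℕ := (l.map (fun F => F.2.2)).sum

def wtF (F : (ι → ℕ) × ℕ × ℕ) : ℕ := 1 + ∑ i, F.1 i

def measureF (l : List ((ι → ℕ) × ℕ × ℕ)) : ℕ := (l.map wtF).sum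

theorem gen (k : ℕ) : ∀ (M : ℕ) (l : List ((ι → ℕ) × ℕ × ℕ))
    (x : Fin k → Option (ι × Fin k)),
    measureF l ≤ M → degB k x + degForms l ≤ k →
    InSpan k (degB k x + degForms l) (fun u => valB k u x * prodForms u l) := by
  intro M
  induction M with
  | zero =>
    intro l x hm hdeg
    cases l with
    | nil =>
      refine span_congr (fun u => ?_) (span_val
        (d := degB k x + degForms ([] : List ((ι → ℕ) × ℕ × ℕ))) x (by simp [degForms]))
      simp [prodForms]
    | cons F tl =>
      exfalso
      simp only [measureF, List.map_cons, List.sum_cons, wtF] at hm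
      omega
  | succ M ih =>
    intro l x hm hdeg
    cases l with
    | nil =>
      refine span_congr (fun u => ?_) (span_val (d := degB k x + degForms ([] : List ((ι → ℕ) × ℕ × ℕ))) x (by simp [degForms]))
      simp [prodForms]
    | cons F tl =>
      obtain ⟨t, s, m⟩ := F
      have hprodcons : ∀ u : ι → ℕ, prodForms u ((t,s,m)::tl)
          = evalForm u (t,s,m) * prodForms u tl := by
        intro u; simp [prodForms]
      have hdegcons : degForms ((t,s,m)::tl) = m + degForms tl := by
        simp [degForms]
      by_cases ht : ∀ i, t i = 0
      · have hsumt : ∑ i, t i = 0 := by simp [ht]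
        have hev : ∀ u : ι → ℕ, evalForm u (t,s,m) = Nat.choose s m := by
          intro u
          simp only [evalForm]
          congr 1
          have : ∀ i, t i * u i = 0 := fun i => by rw [ht i, zero_mul]
          simp [this]
        have hmtl : measureF tl ≤ M := by
          simp only [measureF, List.map_cons, List.sum_cons, wtF, hsumt] at hm ⊢
          omega
        have hbud : degB k x + degForms tl ≤ k := by rw [hdegcons] at hdeg; omega
        have h1 := span_smul (Nat.choose s m) (ih tl x hmtl hbud)
        refine span_mono (by rw [hdegcons]; omega) (span_congr (fun u => ?_) h1)
        rw [hprodcons, hev u]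
        ring
      · push_neg at ht
        obtain ⟨i0, hi0⟩ := ht
        have hti0 : 1 ≤ t i0 := Nat.pos_of_ne_zero hi0
        set t' := Function.update t i0 (t i0 - 1) with ht'
        have herase : ∀ g : ι → ℕ, ∑ i ∈ Finset.univ.erase i0, t' i * g i
            = ∑ i ∈ Finset.univ.erase i0, t i * g i := by
          intro g
          refine Finset.sum_congr rfl fun i hi => ?_
          rw [Finset.mem_erase] at hi
          rw [ht', Function.update_of_ne hi.1]
        have hsplit_lin : ∀ u : ι → ℕ, (∑ i, t i * u i) = u i0 + ∑ i, t' i * u i := by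
          intro u
          have h1 := Finset.sum_erase_add Finset.univ (fun i => t i * u i) (Finset.mem_univ i0)
          have h2 := Finset.sum_erase_add Finset.univ (fun i => t' i * u i) (Finset.mem_univ i0)
          have ht'i0 : t' i0 = t i0 - 1 := by rw [ht', Function.update_self]
          have he := herase u
          have hmul : (t i0 - 1) * u i0 + u i0 = t i0 * u i0 := by
            rw [Nat.sub_mul, one_mul]
            have : u i0 ≤ t i0 * u i0 := Nat.le_mul_of_pos_left _ hti0
            omega
          rw [ht'i0] at h2
          omega
        have hsplit : ∀ u : ι → ℕ, evalForm u (t,s,m)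
            = ∑ p ∈ Finset.range (m+1), Nat.choose (u i0) p * evalForm u (t', s, m - p) := by
          intro u
          show Nat.choose ((∑ i, t i * u i) + s) m = _
          rw [hsplit_lin u, add_assoc, Nat.add_choose_eq]
          rw [Finset.Nat.sum_antidiagonal_eq_sum_range_succ_mk]
          rfl
        have hmeas' : ∀ mm, measureF ((t', s, mm)::tl) ≤ M := by
          intro mm
          have hsum' : ∑ i, t' i + 1 = ∑ i, t i := by
            have h1 := Finset.sum_erase_add Finset.univ t (Finset.mem_univ i0)
            have h2 := Finset.sum_erase_add Finset.univ t' (Finset.mem_univ i0)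
            have he : ∑ i ∈ Finset.univ.erase i0, t' i = ∑ i ∈ Finset.univ.erase i0, t i := by
              refine Finset.sum_congr rfl fun i hi => ?_
              rw [Finset.mem_erase] at hi
              rw [ht', Function.update_of_ne hi.1]
            have ht'i0 : t' i0 = t i0 - 1 := by rw [ht', Function.update_self]
            omega
          simp only [measureF, List.map_cons, List.sum_cons, wtF] at hm ⊢
          omega
        have hkey : ∀ u : ι → ℕ, valB k u x * prodForms u ((t,s,m)::tl)
            = ∑ p ∈ Finset.range (m+1),
              (Nat.choose (u i0) p * valB k u x) * prodForms u ((t', s, m - p)::tl) := by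
          intro u
          rw [hprodcons, hsplit u, Finset.sum_mul, Finset.mul_sum]
          refine Finset.sum_congr rfl fun p _ => ?_
          rw [show prodForms u ((t', s, m-p)::tl) = evalForm u (t',s,m-p) * prodForms u tl from by
            simp [prodForms]]
          ring
        refine span_congr (fun u => (hkey u).symm) ?_
        refine span_sum (Finset.range (m+1)) _ fun p hp => ?_
        rw [Finset.mem_range] at hp
        by_cases hp0 : p = 0
        · subst hp0
          have hbud : degB k x + degForms ((t', s, m)::tl) ≤ k := by
            simp only [degForms, List.map_cons, List.sum_cons] at hdeg ⊢
            omega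
          have h1 := ih ((t', s, m)::tl) x (hmeas' m) hbud
          refine span_mono (le_of_eq ?_) (span_congr (fun u => ?_) h1)
          · simp [degForms]
          · simp
        · have hp1 : 1 ≤ p := Nat.pos_of_ne_zero hp0
          have hm1 : 1 ≤ m := by omega
          have hcard : (Finset.univ.filter (fun tt => x tt ≠ none)).card ≤ degB k x := by
            calc (Finset.univ.filter (fun tt => x tt ≠ none)).card
                = ∑ tt ∈ Finset.univ.filter (fun tt => x tt ≠ none), 1 := by
                  rw [Finset.card_eq_sum_ones]
            _ ≤ ∑ tt ∈ Finset.univ.filter (fun tt => x tt ≠ none), degSlot (x tt) := by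
                  refine Finset.sum_le_sum fun tt htt => ?_
                  rw [Finset.mem_filter] at htt
                  cases hxt : x tt with
                  | none => exact absurd hxt htt.2
                  | some im => simp [degSlot]
            _ ≤ ∑ tt, degSlot (x tt) :=
                  Finset.sum_le_sum_of_subset (Finset.filter_subset _ _)
            _ = degB k x := rfl
          have hdegxk : degB k x + 1 ≤ k := by
            simp only [degForms, List.map_cons, List.sum_cons] at hdeg
            omega
          have hfree : ∃ t0, x t0 = none := by
            by_contra hno
            push_neg at hno
            have : Finset.univ.filter (fun tt => x tt ≠ none) = Finset.univ := by
              refine Finset.filter_true_of_mem fun tt _ => hno tt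
            rw [this, Finset.card_univ, Fintype.card_fin] at hcard
            omega
          obtain ⟨t0, hx0⟩ := hfree
          have hpk : p - 1 < k := by
            simp only [degForms, List.map_cons, List.sum_cons] at hdeg
            omega
          set x' := Function.update x t0 (some (i0, ⟨p - 1, hpk⟩)) with hx'
          have hvalx' : ∀ u : ι → ℕ, valB k u x' = Nat.choose (u i0) p * valB k u x := by
            intro u
            show (∏ tt, slotVal u (x' tt)) = _ * ∏ tt, slotVal u (x tt)
            rw [Finset.prod_eq_mul_prod_sdiff_singleton_of_mem (Finset.mem_univ t0)
              (fun tt => slotVal u (x' tt)),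
              Finset.prod_eq_mul_prod_sdiff_singleton_of_mem (Finset.mem_univ t0)
              (fun tt => slotVal u (x tt))]
            have h1 : slotVal u (x' t0) = Nat.choose (u i0) p := by
              rw [hx', Function.update_self]
              show Nat.choose (u i0) ((p - 1) + 1) = _
              rw [Nat.sub_add_cancel hp1]
            have h2 : slotVal u (x t0) = 1 := by rw [hx0]; rfl
            have h3 : ∀ tt ∈ Finset.univ \ {t0}, slotVal u (x' tt) = slotVal u (x tt) := by
              intro tt htt
              rw [Finset.mem_sdiff, Finset.mem_singleton] at htt
              rw [hx', Function.update_of_ne htt.2]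
            rw [h1, h2, one_mul, Finset.prod_congr rfl h3]
          have hdegx' : degB k x' = p + degB k x := by
            show (∑ tt, degSlot (x' tt)) = p + ∑ tt, degSlot (x tt)
            rw [Finset.sum_eq_add_sum_sdiff_singleton_of_mem (Finset.mem_univ t0)
              (fun tt => degSlot (x' tt)),
              Finset.sum_eq_add_sum_sdiff_singleton_of_mem (Finset.mem_univ t0)
              (fun tt => degSlot (x tt))]
            have h1 : degSlot (x' t0) = p := by
              rw [hx', Function.update_self]
              show (p - 1) + 1 = p
              omega
            have h2 : degSlot (x t0) = 0 := by rw [hx0]; rfl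
            have h3 : ∀ tt ∈ Finset.univ \ {t0}, degSlot (x' tt) = degSlot (x tt) := by
              intro tt htt
              rw [Finset.mem_sdiff, Finset.mem_singleton] at htt
              rw [hx', Function.update_of_ne htt.2]
            rw [h1, h2, Finset.sum_congr rfl h3]
            omega
          have hbud : degB k x' + degForms ((t', s, m - p)::tl) ≤ k := by
            rw [hdegx']
            simp only [degForms, List.map_cons, List.sum_cons] at hdeg ⊢
            omega
          have h1 := ih ((t', s, m - p)::tl) x' (hmeas' (m - p)) hbud
          refine span_mono (le_of_eq ?_) (span_congr (fun u => ?_) h1)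
          · rw [hdegx']
            simp only [degForms, List.map_cons, List.sum_cons]
            omega
          · rw [hvalx' u]
end FAProof3

namespace FAProof3

theorem inFA_choose {α : Type} [Fintype α] {f : List α → ℕ} (hf : InFA f) (k : ℕ) :
    InFA (fun w => Nat.choose (f w) k) := by
  classical
  rw [FAProof.inFA_iff] at hf
  obtain ⟨n, A, a, b, hfa⟩ := hf
  have hvalB_empty : ∀ u : Fin n → ℕ, valB k u (fun _ => none) = 1 := by
    intro u
    refine Finset.prod_eq_one fun t _ => rfl
  -- expansion of a coordinate after one transition
  have hEx : ∀ (σ : α) (x' : Fin k → Option (Fin n × Fin k)), degB k x' ≤ k →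
      InSpan k k (fun u : Fin n → ℕ => valB k (Matrix.vecMul u (A σ)) x') := by
    intro σ x' hd
    set g : Fin k → Option ((Fin n → ℕ) × ℕ × ℕ) :=
      fun t => (x' t).map (fun im => ((fun l => A σ l im.1), 0, (im.2 : ℕ)+1)) with hg
    set lF : List ((Fin n → ℕ) × ℕ × ℕ) := (List.finRange k).filterMap g with hlF
    have hslot : ∀ (u : Fin n → ℕ) (t : Fin k),
        ((g t).map (evalForm u)).getD 1 = slotVal (Matrix.vecMul u (A σ)) (x' t) := by
      intro u t
      cases hxt : x' t with
      | none => simp [hg, hxt, slotVal]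
      | some im =>
        simp only [hg, hxt, Option.map_some, Option.getD_some]
        show Nat.choose ((∑ l, A σ l im.1 * u l) + 0) ((im.2 : ℕ)+1) = _
        rw [add_zero]
        show _ = Nat.choose (Matrix.vecMul u (A σ) im.1) ((im.2 : ℕ)+1)
        congr 1
        rw [show Matrix.vecMul u (A σ) im.1 = ∑ l, u l * A σ l im.1 from by
          simp [Matrix.vecMul, dotProduct]]
        exact Finset.sum_congr rfl fun l _ => Nat.mul_comm _ _
    have hdslot : ∀ t : Fin k, ((g t).map (fun F => F.2.2)).getD 0 = degSlot (x' t) := by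
      intro t
      cases hxt : x' t with
      | none => simp [hg, hxt, degSlot]
      | some im => simp [hg, hxt, degSlot]
    have hprodgen : ∀ (L : List (Fin k)) (u : Fin n → ℕ),
        (((L.filterMap g).map (evalForm u)).prod
          = (L.map (fun t => slotVal (Matrix.vecMul u (A σ)) (x' t))).prod) := by
      intro L u
      induction L with
      | nil => rfl
      | cons hd tlL ihL =>
        rw [List.filterMap_cons]
        cases hxt : g hd with
        | none =>
          have := hslot u hd
          rw [hxt] at this
          simp only [Option.map_none, Option.getD_none] at this
          rw [List.map_cons, List.prod_cons, ← this, ihL, one_mul]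
        | some F =>
          have := hslot u hd
          rw [hxt] at this
          simp only [Option.map_some, Option.getD_some] at this
          rw [List.map_cons, List.prod_cons, List.map_cons, List.prod_cons, ← this, ihL]
    have hdeggen : ∀ L : List (Fin k),
        ((L.filterMap g).map (fun F => F.2.2)).sum
          = (L.map (fun t => degSlot (x' t))).sum := by
      intro L
      induction L with
      | nil => rfl
      | cons hd tlL ihL =>
        rw [List.filterMap_cons]
        cases hxt : g hd with
        | none =>
          have := hdslot hd
          rw [hxt] at this
          simp only [Option.map_none, Option.getD_none] at this
          rw [List.map_cons, List.sum_cons, ← this, ihL, zero_add]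
        | some F =>
          have := hdslot hd
          rw [hxt] at this
          simp only [Option.map_some, Option.getD_some] at this
          rw [List.map_cons, List.sum_cons, List.map_cons, List.sum_cons, ← this, ihL]
    have hprod : ∀ u : Fin n → ℕ, prodForms u lF = valB k (Matrix.vecMul u (A σ)) x' := by
      intro u
      rw [prodForms, hlF, hprodgen (List.finRange k) u, valB, Fin.prod_univ_def]
    have hdegF : degForms lF = degB k x' := by
      rw [degForms, hlF, hdeggen (List.finRange k), degB, Fin.sum_univ_def]
    have hbud : degB k (fun _ => none : Fin k → Option (Fin n × Fin k)) + degForms lF ≤ k := by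
      have : degB k (fun _ => none : Fin k → Option (Fin n × Fin k)) = 0 := by
        refine Finset.sum_eq_zero fun t _ => rfl
      rw [this, hdegF, zero_add]
      exact hd
    have h1 := gen k (measureF lF) lF (fun _ => none) le_rfl hbud
    refine span_mono ?_ (span_congr (fun u => ?_) h1)
    · have : degB k (fun _ => none : Fin k → Option (Fin n × Fin k)) = 0 := by
        refine Finset.sum_eq_zero fun t _ => rfl
      rw [this, hdegF, zero_add]
      exact hd
    · rw [hvalB_empty u, one_mul, hprod u]
  -- final vector expansion
  have hFinSpan : InSpan k k (fun u : Fin n → ℕ => Nat.choose (∑ i, u i * b i) k) := by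
    have hbud : degB k (fun _ => none : Fin k → Option (Fin n × Fin k))
        + degForms [((b, 0, k) : (Fin n → ℕ) × ℕ × ℕ)] ≤ k := by
      have h0 : degB k (fun _ => none : Fin k → Option (Fin n × Fin k)) = 0 := by
        refine Finset.sum_eq_zero fun t _ => rfl
      rw [h0]
      simp [degForms]
    have h1 := gen k (measureF [((b, 0, k) : (Fin n → ℕ) × ℕ × ℕ)])
      [((b, 0, k) : (Fin n → ℕ) × ℕ × ℕ)] (fun _ => none) le_rfl hbud
    refine span_mono ?_ (span_congr (fun u => ?_) h1)
    · have h0 : degB k (fun _ => none : Fin k → Option (Fin n × Fin k)) = 0 := by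
        refine Finset.sum_eq_zero fun t _ => rfl
      rw [h0]
      simp [degForms]
    · rw [hvalB_empty u, one_mul]
      show prodForms u [(b, 0, k)] = _
      rw [prodForms, List.map_cons, List.map_nil, List.prod_cons, List.prod_nil, mul_one]
      show Nat.choose ((∑ i, b i * u i) + 0) k = _
      rw [add_zero]
      congr 1
      exact Finset.sum_congr rfl fun i _ => Nat.mul_comm _ _
  -- the automaton
  set T : α → Matrix (Fin k → Option (Fin n × Fin k)) (Fin k → Option (Fin n × Fin k)) ℕ :=
    fun σ => Matrix.of fun x x' =>
      if h : degB k x' ≤ k then Classical.choose (hEx σ x' h) x else 0 with hT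
  set uvec : List α → Fin n → ℕ := fun w => Matrix.vecMul a (List.prod (List.map A w)) with huvec
  set W : List α → (Fin k → Option (Fin n × Fin k)) → ℕ :=
    fun w x => if degB k x ≤ k then valB k (uvec w) x else 0 with hW
  have hu_app : ∀ (w : List α) σ, uvec (w ++ [σ]) = Matrix.vecMul (uvec w) (A σ) := by
    intro w σ
    simp [huvec, List.map_append, List.prod_append, Matrix.vecMul_vecMul]
  have hstep : ∀ (u : Fin n → ℕ) (σ : α) (x' : Fin k → Option (Fin n × Fin k)),
      (∑ x, (if degB k x ≤ k then valB k u x else 0) * T σ x x')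
        = (if degB k x' ≤ k then valB k (Matrix.vecMul u (A σ)) x' else 0) := by
    intro u σ x'
    by_cases h : degB k x' ≤ k
    · rw [if_pos h]
      obtain ⟨hsupp, hval⟩ := Classical.choose_spec (hEx σ x' h)
      have hval' := hval u
      simp only at hval'
      rw [hval']
      refine Finset.sum_congr rfl fun x _ => ?_
      rw [hT]
      simp only [Matrix.of_apply, dif_pos h]
      by_cases hx : degB k x ≤ k
      · rw [if_pos hx, Nat.mul_comm]
      · rw [if_neg hx]
        have : Classical.choose (hEx σ x' h) x = 0 := by
          by_contra hc
          exact hx (hsupp x hc)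
        rw [this, zero_mul, zero_mul]
    · rw [if_neg h]
      refine Finset.sum_eq_zero fun x _ => ?_
      rw [hT]
      simp only [Matrix.of_apply, dif_neg h, mul_zero]
  have hinv : ∀ w : List α, Matrix.vecMul (W []) (List.prod (List.map T w)) = W w := by
    intro w
    induction w using List.reverseRecOn with
    | nil => simp [Matrix.vecMul_one]
    | append_singleton w σ ih =>
      rw [List.map_append, List.prod_append, List.map_singleton, List.prod_singleton,
        ← Matrix.vecMul_vecMul, ih]
      funext x'
      have hvm : Matrix.vecMul (W w) (T σ) x'
          = ∑ x, W w x * T σ x x' := by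
        simp [Matrix.vecMul, dotProduct]
      rw [hvm, hW]
      simp only
      rw [hstep (uvec w) σ x', hu_app w σ]
  set bhat := Classical.choose hFinSpan with hbhat
  refine FAProof.inFA_of_index _ T (W []) bhat fun w => ?_
  rw [hinv w]
  obtain ⟨hsupp, hval⟩ := Classical.choose_spec hFinSpan
  have hdot : dotProduct (W w) bhat = ∑ x, W w x * bhat x := rfl
  rw [hdot]
  have hfw : f w = ∑ i, uvec w i * b i := by rw [hfa w]; rfl
  have hval' := hval (uvec w)
  simp only at hval'
  rw [hfw, hval']
  refine Finset.sum_congr rfl fun x _ => ?_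
  rw [hW]
  simp only
  by_cases hx : degB k x ≤ k
  · rw [if_pos hx, Nat.mul_comm]
  · rw [if_neg hx]
    have : bhat x = 0 := by
      by_contra hc
      exact hx (hsupp x hc)
    rw [hbhat] at this
    rw [this, zero_mul, zero_mul]

end FAProof3

namespace FAProof4
open Polynomial

noncomputable def Δ (ψ : ℚ[X]) : ℚ[X] := ψ.comp (X + C 1) - ψ

theorem delta_eval (ψ : ℚ[X]) (x : ℚ) : (Δ ψ).eval x = ψ.eval (x + 1) - ψ.eval x := by
  simp [Δ, eval_comp]

theorem delta_zero : Δ (0 : ℚ[X]) = 0 := by simp [Δ]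

theorem newton (m : ℕ) : ∀ (ψ : ℚ[X]) (N : ℕ),
    ψ.eval ((N : ℚ) + m) = ∑ k ∈ Finset.range (m+1),
      (Δ^[k] ψ).eval (N : ℚ) * (m.choose k : ℚ) := by
  induction m with
  | zero => intro ψ N; simp
  | succ m ih =>
    intro ψ N
    have h1 : ((N:ℚ) + ((m+1 : ℕ) : ℚ)) = (((N+1 : ℕ) : ℚ) + (m : ℚ)) := by
      push_cast; ring
    rw [h1, ih ψ (N+1)]
    have h2 : ∀ k, (Δ^[k] ψ).eval ((N+1 : ℕ) : ℚ)
        = (Δ^[k+1] ψ).eval (N : ℚ) + (Δ^[k] ψ).eval (N : ℚ) := by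
      intro k
      rw [Function.iterate_succ_apply', delta_eval]
      push_cast
      ring
    set A : ℕ → ℚ := fun k => (Δ^[k] ψ).eval (N : ℚ) with hA
    have lhs_eq : ∑ k ∈ Finset.range (m+1), (Δ^[k] ψ).eval ((N+1:ℕ):ℚ) * (m.choose k : ℚ)
        = (∑ k ∈ Finset.range (m+1), A (k+1) * (m.choose k : ℚ))
          + ∑ k ∈ Finset.range (m+1), A k * (m.choose k : ℚ) := by
      rw [← Finset.sum_add_distrib]
      refine Finset.sum_congr rfl fun k _ => ?_
      rw [h2 k]; ring
    rw [lhs_eq]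
    have hshift : ∑ k ∈ Finset.range (m+1), A k * (m.choose k : ℚ)
        = A 0 + ∑ k ∈ Finset.range (m+1), A (k+1) * (m.choose (k+1) : ℚ) := by
      rw [Finset.sum_range_succ' (fun k => A k * (m.choose k : ℚ)) m]
      have : ∑ k ∈ Finset.range (m+1), A (k+1) * (m.choose (k+1) : ℚ)
          = ∑ k ∈ Finset.range m, A (k+1) * (m.choose (k+1) : ℚ) := by
        rw [Finset.sum_range_succ]
        simp [Nat.choose_succ_self]
      rw [this]
      simp
      ring
    rw [hshift]
    rw [Finset.sum_range_succ' (fun k => A k * (((m+1).choose k : ℕ) : ℚ)) (m+1)]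
    have hpas : ∑ k ∈ Finset.range (m+1), A (k+1) * (((m+1).choose (k+1) : ℕ) : ℚ)
        = (∑ k ∈ Finset.range (m+1), A (k+1) * (m.choose k : ℚ))
          + ∑ k ∈ Finset.range (m+1), A (k+1) * (m.choose (k+1) : ℚ) := by
      rw [← Finset.sum_add_distrib]
      refine Finset.sum_congr rfl fun k _ => ?_
      rw [Nat.choose_succ_succ]
      push_cast
      ring
    rw [hpas]
    simp only [Nat.choose_zero_right, Nat.cast_one, mul_one]
    ring

theorem delta_natDegree_lt {ψ : ℚ[X]} (h : 0 < ψ.natDegree) :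
    (Δ ψ).natDegree = ψ.natDegree - 1 ∧
      (Δ ψ).leadingCoeff = (ψ.natDegree : ℚ) * ψ.leadingCoeff := by
  set e := ψ.natDegree with he
  have hψ0 : ψ ≠ 0 := by
    intro hc
    have h' : 0 < ψ.natDegree := h
    rw [hc, natDegree_zero] at h'
    exact lt_irrefl _ h'
  have hXC : (X + C (1:ℚ)).natDegree = 1 := natDegree_X_add_C 1
  have hcompdeg : (ψ.comp (X + C 1)).natDegree = e := by
    rw [natDegree_comp, hXC, mul_one]
  have hcoeff : ∀ j, (ψ.comp (X + C 1)).coeff j = (hasseDeriv j ψ).eval 1 := by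
    intro j
    rw [← taylor_apply, taylor_coeff]
  -- coefficient at e
  have hce : (ψ.comp (X + C 1)).coeff e = ψ.coeff e := by
    rw [hcoeff e]
    have hdeg : (hasseDeriv e ψ).natDegree < 1 := by
      have := natDegree_hasseDeriv_le ψ e
      omega
    rw [eval_eq_sum_range' hdeg]
    simp [hasseDeriv_coeff]
  -- coefficient at e - 1
  have hce1 : (ψ.comp (X + C 1)).coeff (e-1) = ψ.coeff (e-1) + (e:ℚ) * ψ.coeff e := by
    rw [hcoeff (e-1)]
    have hdeg : (hasseDeriv (e-1) ψ).natDegree < 2 := by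
      have := natDegree_hasseDeriv_le ψ (e-1)
      omega
    rw [eval_eq_sum_range' hdeg]
    rw [Finset.sum_range_succ, Finset.sum_range_one]
    simp only [hasseDeriv_coeff, pow_zero, mul_one, pow_one, one_pow]
    have h1 : (0 + (e-1)).choose (e-1) = 1 := by simp
    have h2 : (1 + (e-1)).choose (e-1) = e := by
      rw [show 1 + (e-1) = (e-1)+1 from by omega, Nat.choose_succ_self_right]
      omega
    rw [h1, h2]
    have h3 : 0 + (e-1) = e - 1 := by omega
    have h4 : 1 + (e-1) = e := by omega
    rw [h3, h4]
    push_cast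
    ring
  have hcoeffD : (Δ ψ).coeff (e-1) = (e:ℚ) * ψ.leadingCoeff := by
    rw [Δ, coeff_sub, hce1, leadingCoeff, ← he]
    ring
  have hne : ((e:ℚ) * ψ.leadingCoeff) ≠ 0 :=
    mul_ne_zero (Nat.cast_ne_zero.mpr (by omega)) (leadingCoeff_ne_zero.mpr hψ0)
  have hdegle : (Δ ψ).natDegree ≤ e - 1 := by
    rw [natDegree_le_iff_coeff_eq_zero]
    intro j hj
    rw [Δ, coeff_sub]
    rcases Nat.lt_or_ge e j with hc | hc
    · rw [coeff_eq_zero_of_natDegree_lt (by rw [hcompdeg]; exact hc),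
        coeff_eq_zero_of_natDegree_lt (by rw [← he]; exact hc), sub_zero]
    · have hje : j = e := by omega
      subst hje
      rw [hce, sub_self]
  have hdegeq : (Δ ψ).natDegree = e - 1 := by
    refine le_antisymm hdegle ?_
    refine le_natDegree_of_ne_zero ?_
    rw [hcoeffD]
    exact hne
  constructor
  · exact hdegeq
  · rw [leadingCoeff, hdegeq, hcoeffD]

theorem delta_vanish : ∀ (j : ℕ) (ψ : ℚ[X]), ψ.natDegree ≤ j → Δ^[j+1] ψ = 0 := by
  intro j
  induction j with
  | zero =>
    intro ψ hd
    obtain ⟨c, rfl⟩ := natDegree_eq_zero.mp (Nat.le_zero.mp hd)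
    simp [Δ]
  | succ j ih =>
    intro ψ hd
    by_cases h0 : ψ.natDegree = 0
    · obtain ⟨c, rfl⟩ := natDegree_eq_zero.mp h0
      have : Δ (C c) = 0 := by simp [Δ]
      rw [Function.iterate_succ_apply, this]
      exact Function.iterate_fixed delta_zero (j+1)
    · have hpos : 0 < ψ.natDegree := Nat.pos_of_ne_zero h0
      have hd' : (Δ ψ).natDegree ≤ j := by
        have := (delta_natDegree_lt hpos).1
        omega
      rw [Function.iterate_succ_apply]
      exact ih (Δ ψ) hd'

theorem eventually_nonneg {ψ : ℚ[X]} (h : 0 < ψ.leadingCoeff) :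
    ∃ N0 : ℕ, ∀ n : ℕ, N0 ≤ n → 0 ≤ ψ.eval (n : ℚ) := by
  by_cases h0 : ψ.natDegree = 0
  · obtain ⟨c, rfl⟩ := natDegree_eq_zero.mp h0
    refine ⟨0, fun n _ => ?_⟩
    simp only [eval_C]
    simpa [leadingCoeff] using h.le
  · have hdeg : 0 < ψ.degree := natDegree_pos_iff_degree_pos.mp (Nat.pos_of_ne_zero h0)
    have htend := Polynomial.tendsto_atTop_of_leadingCoeff_nonneg ψ hdeg h.le
    have hev := htend.eventually_ge_atTop 0
    rw [Filter.eventually_atTop] at hev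
    obtain ⟨x0, hx0⟩ := hev
    refine ⟨⌈x0⌉₊, fun n hn => ?_⟩
    exact hx0 _ (le_trans (Nat.le_ceil x0) (by exact_mod_cast hn))

theorem delta_int_valued (φ : ℚ[X]) (hφ : ∀ k : ℤ, ∃ z : ℤ, φ.eval (k : ℚ) = (z : ℚ)) :
    ∀ (k : ℕ) (j : ℕ), ∃ z : ℤ, (Δ^[k] φ).eval (j : ℚ) = (z : ℚ) := by
  intro k
  induction k with
  | zero =>
    intro j
    obtain ⟨z, hz⟩ := hφ (j : ℤ)
    exact ⟨z, by rw [← hz]; norm_num⟩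
  | succ k ih =>
    intro j
    obtain ⟨z1, hz1⟩ := ih (j+1)
    obtain ⟨z2, hz2⟩ := ih j
    refine ⟨z1 - z2, ?_⟩
    rw [Function.iterate_succ_apply', delta_eval]
    push_cast at hz1 ⊢
    rw [← hz1, ← hz2]

end FAProof4


open FAProof4 in
/-- for `f ∈ #FA` and an integer-valued polynomial `φ ∈ ℚ[x]`, the
function `w ↦ max(φ(f(w)), 0)` (a natural number, expressed via `Int.toNat ∘ Int.floor`,
which agrees with `max(·,0)` on integer values) is in #FA. -/
theorem inFA_max_polynomial_zero {α : Type} [Fintype α] (f : List α → ℕ)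
    (hf : InFA f) (φ : Polynomial ℚ)
    (hφ : ∀ k : ℤ, ∃ z : ℤ, φ.eval (k : ℚ) = (z : ℚ)) :
    InFA (fun w => (⌊φ.eval ((f w : ℕ) : ℚ)⌋).toNat) := by
  classical
  by_cases hD : φ.natDegree = 0
  · obtain ⟨c, rfl⟩ := Polynomial.natDegree_eq_zero.mp hD
    have heq : (fun w : List α => (⌊(Polynomial.C c).eval ((f w : ℕ) : ℚ)⌋).toNat)
        = fun _ : List α => (⌊c⌋).toNat := by
      funext w; rw [Polynomial.eval_C]
    rw [heq]
    exact FAProof.inFA_const _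
  · have hφ0 : φ ≠ 0 := fun hc => hD (by rw [hc]; simp)
    have hlc : φ.leadingCoeff ≠ 0 := Polynomial.leadingCoeff_ne_zero.mpr hφ0
    rcases hlc.lt_or_gt with hneg | hpos
    · -- negative leading coefficient: eventually zero
      have hpos' : 0 < (-φ).leadingCoeff := by
        rw [Polynomial.leadingCoeff_neg]; linarith
      obtain ⟨N, hN⟩ := eventually_nonneg hpos'
      have hnonpos : ∀ n : ℕ, N ≤ n → φ.eval (n:ℚ) ≤ 0 := by
        intro n hn
        have := hN n hn
        rw [Polynomial.eval_neg] at this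
        linarith
      set t : ℕ → ℕ := fun j => if j < N then (⌊φ.eval (j:ℚ)⌋).toNat else 0 with htt
      have ht : ∀ m, N ≤ m → t m = t N := by
        intro m hm
        rw [htt]
        simp only [if_neg (by omega : ¬ m < N), if_neg (by omega : ¬ N < N)]
      have key : ∀ n : ℕ, (⌊φ.eval (n:ℚ)⌋).toNat = t n := by
        intro n
        by_cases hn : n < N
        · rw [htt]; simp only [if_pos hn]
        · push_neg at hn
          have h1 := hnonpos n hn
          have h2 : ⌊φ.eval (n:ℚ)⌋ ≤ 0 := by
            have := Int.floor_le_floor h1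
            simpa using this
          rw [htt]
          simp only [if_neg (by omega : ¬ n < N)]
          exact Int.toNat_of_nonpos h2
      have heq : (fun w : List α => (⌊φ.eval ((f w : ℕ):ℚ)⌋).toNat) = fun w => t (f w) :=
        funext fun w => key (f w)
      rw [heq]
      exact FAProof2.inFA_table hf N t ht
    · -- positive leading coefficient
      have hDpos : 0 < φ.natDegree := Nat.pos_of_ne_zero hD
      set D := φ.natDegree with hDdef
      have hiter : ∀ k, k ≤ D → (Δ^[k] φ).natDegree = D - k ∧ 0 < (Δ^[k] φ).leadingCoeff := by
        intro k
        induction k with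
        | zero => intro _; exact ⟨by simp [hDdef], hpos⟩
        | succ k ihk =>
          intro hk
          obtain ⟨hd1, hl1⟩ := ihk (by omega)
          have hposk : 0 < (Δ^[k] φ).natDegree := by omega
          obtain ⟨hd2, hl2⟩ := delta_natDegree_lt hposk
          rw [Function.iterate_succ_apply']
          refine ⟨by omega, ?_⟩
          rw [hl2, hd1]
          have : (0:ℚ) < ((D - k : ℕ) : ℚ) := by
            have : 1 ≤ D - k := by omega
            exact_mod_cast Nat.lt_of_lt_of_le Nat.zero_lt_one (by exact_mod_cast this)
          exact mul_pos this hl1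
      have hvanish : ∀ k, D < k → Δ^[k] φ = 0 := by
        intro k hk
        have h1 : Δ^[(k-1)+1] φ = 0 := delta_vanish (k-1) φ (by omega)
        rwa [show (k-1)+1 = k from by omega] at h1
      have hall : ∀ k : ℕ, ∃ N0, ∀ n : ℕ, N0 ≤ n → 0 ≤ (Δ^[k] φ).eval (n:ℚ) := by
        intro k
        rcases le_or_gt k D with hk | hk
        · exact eventually_nonneg (hiter k hk).2
        · exact ⟨0, fun n _ => by rw [hvanish k hk]; simp⟩
      choose n0 hn0 using hall
      set N := (Finset.range (D+1)).sup n0 with hNdef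
      have hNk : ∀ k, k ≤ D → 0 ≤ (Δ^[k] φ).eval ((N:ℕ):ℚ) := fun k hk =>
        hn0 k N (Finset.le_sup (Finset.mem_range.mpr (by omega)))
      set d : ℕ → ℕ := fun k => (⌊(Δ^[k] φ).eval ((N:ℕ):ℚ)⌋).toNat with hddef
      have hdk : ∀ k, k ≤ D → ((d k : ℕ) : ℚ) = (Δ^[k] φ).eval ((N:ℕ):ℚ) := by
        intro k hk
        obtain ⟨z, hz⟩ := delta_int_valued φ hφ k N
        have hz0 : 0 ≤ z := by
          have := hNk k hk
          rw [hz] at this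
          exact_mod_cast this
        rw [hddef]
        simp only
        rw [hz, Int.floor_intCast]
        rw [show ((z.toNat : ℕ) : ℚ) = ((z.toNat : ℤ) : ℚ) from by push_cast; ring,
          Int.toNat_of_nonneg hz0]
      have hdzero : ∀ k, D < k → d k = 0 := by
        intro k hk
        rw [hddef]
        simp only
        rw [hvanish k hk]
        simp
      have hval : ∀ n : ℕ, N ≤ n →
          (⌊φ.eval (n:ℚ)⌋).toNat = ∑ k ∈ Finset.range (D+1), d k * Nat.choose (n - N) k := by
        intro n hn
        set m := n - N with hm
        have hcast : (n:ℚ) = (N:ℚ) + (m:ℕ) := by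
          have : n = N + m := by omega
          rw [this]
          push_cast
          ring
        have hq : φ.eval (n:ℚ) = ∑ k ∈ Finset.range (D+1), (d k : ℚ) * (Nat.choose m k : ℚ) := by
          rw [hcast, newton m φ N]
          set M := max m D with hM
          have hsum1 : ∑ k ∈ Finset.range (m+1), (Δ^[k] φ).eval ((N:ℕ):ℚ) * (m.choose k : ℚ)
              = ∑ k ∈ Finset.range (M+1), (Δ^[k] φ).eval ((N:ℕ):ℚ) * (m.choose k : ℚ) := by
            refine Finset.sum_subset ?_ ?_
            · intro x hx
              rw [Finset.mem_range] at *
              omega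
            · intro x _ hx
              rw [Finset.mem_range, not_lt] at hx
              rw [Nat.choose_eq_zero_of_lt (by omega), Nat.cast_zero, mul_zero]
          have hsum2 : ∑ k ∈ Finset.range (M+1), (Δ^[k] φ).eval ((N:ℕ):ℚ) * (m.choose k : ℚ)
              = ∑ k ∈ Finset.range (M+1), (d k : ℚ) * (m.choose k : ℚ) := by
            refine Finset.sum_congr rfl fun k hk => ?_
            rcases le_or_gt k D with hkD | hkD
            · rw [hdk k hkD]
            · rw [hvanish k hkD, hdzero k hkD]
              simp
          have hsum3 : ∑ k ∈ Finset.range (M+1), (d k : ℚ) * (m.choose k : ℚ)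
              = ∑ k ∈ Finset.range (D+1), (d k : ℚ) * (m.choose k : ℚ) := by
            refine (Finset.sum_subset ?_ ?_).symm
            · intro x hx
              rw [Finset.mem_range] at *
              omega
            · intro x _ hx
              rw [Finset.mem_range, not_lt] at hx
              rw [hdzero x (by omega), Nat.cast_zero, zero_mul]
          rw [hsum1, hsum2, hsum3]
        have hnat : φ.eval (n:ℚ)
            = ((∑ k ∈ Finset.range (D+1), d k * Nat.choose m k : ℕ) : ℚ) := by
          rw [hq]
          push_cast
          ring
        rw [hnat, Int.floor_natCast]
        omega
      set t : ℕ → ℕ := fun j => if j < N then (⌊φ.eval (j:ℚ)⌋).toNat else d 0 with htt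
      have ht : ∀ m, N ≤ m → t m = t N := by
        intro m hm
        rw [htt]
        simp only [if_neg (by omega : ¬ m < N), if_neg (by omega : ¬ N < N)]
      have hdecomp : ∀ n : ℕ, (⌊φ.eval (n:ℚ)⌋).toNat
          = (∑ k ∈ Finset.Icc 1 D, d k * Nat.choose (n - N) k) + t n := by
        intro n
        by_cases hn : n < N
        · have hz : n - N = 0 := by omega
          rw [hz]
          have hzero : ∑ k ∈ Finset.Icc 1 D, d k * Nat.choose 0 k = 0 := by
            refine Finset.sum_eq_zero fun k hk => ?_
            rw [Finset.mem_Icc] at hk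
            rw [show k = (k-1)+1 from by omega, Nat.choose_zero_succ, mul_zero]
          rw [hzero, zero_add, htt]
          simp only [if_pos hn]
        · push_neg at hn
          rw [hval n hn]
          have hsplit : Finset.range (D+1) = insert 0 (Finset.Icc 1 D) := by
            ext x
            simp only [Finset.mem_range, Finset.mem_insert, Finset.mem_Icc]
            omega
          rw [hsplit, Finset.sum_insert (by simp)]
          rw [Nat.choose_zero_right, mul_one, htt]
          simp only [if_neg (by omega : ¬ n < N)]
          ring
      have heq : (fun w : List α => (⌊φ.eval ((f w : ℕ):ℚ)⌋).toNat)
          = fun w => (∑ k ∈ Finset.Icc 1 D, (fun w => d k * Nat.choose (f w - N) k) w) + t (f w) :=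
        funext fun w => hdecomp (f w)
      rw [heq]
      refine FAProof.inFA_add ?_ (FAProof2.inFA_table hf N t ht)
      refine FAProof.inFA_sum (Finset.Icc 1 D) _ fun k _ => ?_
      have h1 := FAProof.inFA_smul (FAProof3.inFA_choose (FAProof2.inFA_monus hf N) k) (d k)
      simpa using h1
end

section
/- Let k ≥ 1 and A ∈ Matrix (Fin k) (Fin k) ℕ, let v ∈ Fin k, and define f : ℕ → ℕ by f(n) = (A^n)_{v,v}. Then exactly one of the following holds: (1) f(0) = 1 and f(n) = 0 for all n ≥ 1; (2) there is p ≥ 1 such that for all n ∈ ℕ, f(n) = 1 if p ∣ n and f(n) = 0 otherwise; (3) there are p ≥ 1 and a function g : ℕ → ℕ with g ∈ 2^{Θ(n)} such that for all n ∈ ℕ, f(n) = g(n) if p ∣ n and f(n) = 0 otherwise. -/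
/-- `g ∈ 2^{Θ(n)}`: there are real constants `γ₁, γ₂ > 0` and `N` with
`2^{γ₁ n} ≤ g n ≤ 2^{γ₂ n}` for all `n ≥ N`. -/
def ExpTheta (g : ℕ → ℕ) : Prop :=
  ∃ (γ₁ γ₂ : ℝ), 0 < γ₁ ∧ 0 < γ₂ ∧ ∃ N : ℕ, ∀ n : ℕ, N ≤ n →
    (2 : ℝ) ^ (γ₁ * n) ≤ (g n : ℝ) ∧ (g n : ℝ) ≤ (2 : ℝ) ^ (γ₂ * n)

namespace DET2



/-- list powers -/
def pw {α : Type*} (t : List α) : ℕ → List α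
  | 0 => []
  | n+1 => t ++ pw t n

@[simp] lemma pw_zero {α : Type*} (t : List α) : pw t 0 = [] := rfl
lemma pw_succ {α : Type*} (t : List α) (n : ℕ) : pw t (n+1) = t ++ pw t n := rfl

lemma pw_length {α : Type*} (t : List α) (n : ℕ) : (pw t n).length = n * t.length := by
  induction n with
  | zero => simp
  | succ n ih => simp [pw_succ, ih]; ring

lemma pw_add {α : Type*} (t : List α) (m n : ℕ) : pw t (m + n) = pw t m ++ pw t n := by
  induction m with
  | zero => simp
  | succ m ih => rw [Nat.succ_add, pw_succ, ih, pw_succ, List.append_assoc]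

lemma pw_nil {α : Type*} (n : ℕ) : pw ([] : List α) n = [] := by
  induction n with
  | zero => rfl
  | succ n ih => rw [pw_succ, ih]; rfl

/-- commuting lists are powers of a common list -/
lemma comm_pw {α : Type*} : ∀ (n : ℕ) (u v : List α), u.length + v.length ≤ n →
    u ++ v = v ++ u → ∃ t i j, u = pw t i ∧ v = pw t j := by
  intro n
  induction n with
  | zero =>
    intro u v hl _
    have hu : u = [] := by cases u <;> simp_all
    have hv : v = [] := by cases v <;> simp_all
    exact ⟨[], 0, 0, by simp [hu], by simp [hv]⟩
  | succ n ih =>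
    intro u v hl h
    rcases List.eq_nil_or_concat u with hu | _
    · exact ⟨v, 0, 1, by simp [hu], by simp [pw_succ]⟩
    rcases List.eq_nil_or_concat v with hv | _
    · exact ⟨u, 1, 0, by simp [pw_succ], by simp [hv]⟩
    have hu' : u ≠ [] := by rename_i h1 _; rcases h1 with ⟨l, a, rfl⟩; simp
    have hv' : v ≠ [] := by rename_i h2; rcases h2 with ⟨l, a, rfl⟩; simp
    rcases List.append_eq_append_iff.mp h with ⟨w, hw1, hw2⟩ | ⟨w, hw1, hw2⟩
    · -- v = u ++ w, v = w ++ u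
      have hcomm : u ++ w = w ++ u := by rw [← hw1, ← hw2]
      have hlen : u.length + w.length ≤ n := by
        have h1 : u.length + w.length = v.length := by
          rw [hw1]; simp
        have h2 : 1 ≤ u.length := by cases u <;> simp_all
        omega
      obtain ⟨t, i, j, hti, htj⟩ := ih u w hlen hcomm
      exact ⟨t, i, i + j, hti, by rw [hw1, hti, htj, ← pw_add]⟩
    · -- u = v ++ w, u = w ++ v
      have hcomm : v ++ w = w ++ v := by rw [← hw1, ← hw2]
      have hlen : v.length + w.length ≤ n := by
        have h1 : v.length + w.length = u.length := by rw [hw1]; simp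
        have h2 : 1 ≤ v.length := by cases v <;> simp_all
        omega
      obtain ⟨t, i, j, hti, htj⟩ := ih v w hlen hcomm
      exact ⟨t, i + j, i, by rw [hw1, hti, htj, ← pw_add], hti⟩


variable {k : ℕ} (A : Matrix (Fin k) (Fin k) ℕ)




/-- validity of a walk: each step `(b, c)` from current vertex `i` requires `c < A i b`
and moves to `b`. -/
def Ok : Fin k → List (Fin k × ℕ) → Fin k → Prop
  | i, [], j => i = j
  | i, s :: l, j => s.2 < A i s.1 ∧ Ok s.1 l j

@[simp] lemma ok_nil {i j : Fin k} : Ok A i [] j ↔ i = j := Iff.rfl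
@[simp] lemma ok_cons {i j : Fin k} {s : Fin k × ℕ} {l : List (Fin k × ℕ)} :
    Ok A i (s :: l) j ↔ s.2 < A i s.1 ∧ Ok A s.1 l j := Iff.rfl

lemma ok_append {l₁ l₂ : List (Fin k × ℕ)} : ∀ {i m j : Fin k},
    Ok A i l₁ m → Ok A m l₂ j → Ok A i (l₁ ++ l₂) j := by
  induction l₁ with
  | nil => intro i m j h1 h2; cases h1; simpa using h2
  | cons s l ih =>
    intro i m j h1 h2
    exact ⟨h1.1, ih h1.2 h2⟩

lemma ok_split {l₁ l₂ : List (Fin k × ℕ)} : ∀ {i j : Fin k},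
    Ok A i (l₁ ++ l₂) j → ∃ m, Ok A i l₁ m ∧ Ok A m l₂ j := by
  induction l₁ with
  | nil => intro i j h; exact ⟨i, rfl, by simpa using h⟩
  | cons s l ih =>
    intro i j h
    obtain ⟨m, h1, h2⟩ := ih h.2
    exact ⟨m, ⟨h.1, h1⟩, h2⟩

lemma ok_getLast? {l : List (Fin k × ℕ)} : ∀ {i j : Fin k}, Ok A i l j → l ≠ [] →
    ∃ c, l.getLast? = some (j, c) := by
  induction l with
  | nil => simp
  | cons s l ih =>
    intro i j h _
    rcases List.eq_nil_or_concat l with hl | hl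
    · subst hl
      have : s.1 = j := h.2
      exact ⟨s.2, by simp [← this]⟩
    · have hne : l ≠ [] := by rcases hl with ⟨l', a, rfl⟩; simp
      obtain ⟨c, hc⟩ := ih h.2 hne
      refine ⟨c, ?_⟩
      cases l with
      | nil => simp_all
      | cons a l' => rw [List.getLast?_cons_cons]; exact hc

def walks : ℕ → Fin k → Fin k → Finset (List (Fin k × ℕ))
  | 0, i, j => if i = j then {([] : List (Fin k × ℕ))} else ∅
  | (n+1), i, j => Finset.univ.biUnion fun b : Fin k =>
      (Finset.range (A i b)).biUnion fun c =>
        (walks n b j).image fun l => (b, c) :: l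

lemma mem_walks : ∀ (n : ℕ) (l : List (Fin k × ℕ)) (i j : Fin k),
    l ∈ walks A n i j ↔ l.length = n ∧ Ok A i l j := by
  intro n
  induction n with
  | zero =>
    intro l i j
    rw [walks]
    split_ifs with h
    · subst h; cases l <;> simp [Ok]
    · cases l <;> simp [Ok, h]
  | succ n ih =>
    intro l i j
    rw [walks]
    simp only [Finset.mem_biUnion, Finset.mem_univ, Finset.mem_range, Finset.mem_image,
      true_and]
    constructor
    · rintro ⟨b, c, hc, l', hl', rfl⟩
      rw [ih] at hl'
      exact ⟨by simp [hl'.1], hc, hl'.2⟩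
    · intro h
      cases l with
      | nil => simp at h
      | cons s l' =>
        refine ⟨s.1, s.2, h.2.1, l', ?_, by simp⟩
        rw [ih]
        exact ⟨by simpa using h.1, h.2.2⟩

lemma card_walks : ∀ (n : ℕ) (i j : Fin k), (walks A n i j).card = (A ^ n) i j := by
  intro n
  induction n with
  | zero =>
    intro i j
    rw [walks, pow_zero]
    by_cases h : i = j <;> simp [h, Matrix.one_apply]
  | succ n ih =>
    intro i j
    rw [walks, pow_succ']
    rw [Finset.card_biUnion]
    · rw [Matrix.mul_apply]
      refine Finset.sum_congr rfl fun b _ => ?_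
      rw [Finset.card_biUnion]
      · rw [Finset.sum_congr rfl fun c _ =>
          Finset.card_image_of_injective _ (fun l₁ l₂ h => by simpa using h)]
        simp [ih]
      · intro c₁ _ c₂ _ hne
        simp only [Finset.disjoint_left, Finset.mem_image]
        rintro x ⟨l₁, _, rfl⟩ ⟨l₂, _, hx⟩
        exact hne (congrArg Prod.snd (List.cons_eq_cons.mp hx).1).symm
    · intro b₁ _ b₂ _ hne
      simp only [Finset.disjoint_left, Finset.mem_biUnion, Finset.mem_image]
      rintro x ⟨c₁, _, l₁, _, rfl⟩ ⟨c₂, _, l₂, _, hx⟩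
      apply hne
      exact (congrArg Prod.fst (List.cons_eq_cons.mp hx).1).symm


variable (v : Fin k)

lemma f_zero : (A ^ 0) v v = 1 := by simp [Matrix.one_apply]

lemma supermult (a b : ℕ) : (A ^ a) v v * (A ^ b) v v ≤ (A ^ (a + b)) v v := by
  rw [pow_add, Matrix.mul_apply]
  exact Finset.single_le_sum (f := fun w => (A ^ a) v w * (A ^ b) w v)
    (fun i _ => Nat.zero_le _) (Finset.mem_univ v)

lemma pow_le_f (a q : ℕ) : ((A ^ a) v v) ^ q ≤ (A ^ (a * q)) v v := by
  induction q with
  | zero => simp [f_zero]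
  | succ q ih =>
    calc ((A ^ a) v v) ^ (q+1) = ((A ^ a) v v) ^ q * (A ^ a) v v := by ring
    _ ≤ (A ^ (a * q)) v v * (A ^ a) v v := Nat.mul_le_mul_right _ ih
    _ ≤ (A ^ (a * q + a)) v v := supermult A v _ _
    _ = (A ^ (a * (q+1))) v v := by ring_nf

lemma mem_add {a b : ℕ} (ha : 1 ≤ (A ^ a) v v) (hb : 1 ≤ (A ^ b) v v) :
    1 ≤ (A ^ (a + b)) v v :=
  le_trans (Nat.one_le_iff_ne_zero.mpr (by positivity)) (supermult A v a b)

lemma mem_mul {a : ℕ} (m : ℕ) (ha : 1 ≤ (A ^ a) v v) : 1 ≤ (A ^ (a * m)) v v :=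
  le_trans (Nat.one_le_iff_ne_zero.mpr (by positivity)) (pow_le_f A v a m)

/-- pw of a closed walk is a closed walk -/
lemma ok_pw {t : List (Fin k × ℕ)} (h : Ok A v t v) (n : ℕ) : Ok A v (pw t n) v := by
  induction n with
  | zero => rfl
  | succ n ih => exact ok_append A h ih

/-- key extraction lemma: if all diagonal counts are ≤ 1, two closed-walk lengths
have a common divisor that is itself a closed-walk length. -/
lemma exists_dvd (hcard : ∀ n, (A ^ n) v v ≤ 1) {x y : ℕ} (hx : 1 ≤ x) (hy : 1 ≤ y)
    (hfx : 1 ≤ (A ^ x) v v) (hfy : 1 ≤ (A ^ y) v v) :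
    ∃ d, 1 ≤ d ∧ 1 ≤ (A ^ d) v v ∧ d ∣ x ∧ d ∣ y := by
  have hwx : ∃ w, w ∈ walks A x v v := Finset.card_pos.mp (by rw [card_walks]; omega)
  have hwy : ∃ w, w ∈ walks A y v v := Finset.card_pos.mp (by rw [card_walks]; omega)
  obtain ⟨wx, hwx⟩ := hwx
  obtain ⟨wy, hwy⟩ := hwy
  rw [mem_walks] at hwx hwy
  -- both concatenations are closed walks of length x+y
  have h1 : (wx ++ wy) ∈ walks A (x + y) v v := by
    rw [mem_walks]
    exact ⟨by simp [hwx.1, hwy.1], ok_append A hwx.2 hwy.2⟩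
  have h2 : (wy ++ wx) ∈ walks A (x + y) v v := by
    rw [mem_walks]
    exact ⟨by simp [hwx.1, hwy.1, Nat.add_comm], ok_append A hwy.2 hwx.2⟩
  have heq : wx ++ wy = wy ++ wx := by
    have := hcard (x + y)
    rw [← card_walks] at this
    exact Finset.card_le_one.mp this _ h1 _ h2
  obtain ⟨t, i, j, hti, htj⟩ := comm_pw (wx.length + wy.length) wx wy le_rfl heq
  -- t is nonempty, i ≥ 1
  have hwxne : wx ≠ [] := by
    intro h; rw [h] at hwx; simp at hwx; omega
  have htne : t ≠ [] := by
    intro h; rw [h, pw_nil] at hti; exact hwxne hti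
  have hine : i ≠ 0 := by
    intro h; rw [h] at hti; exact hwxne hti
  -- t is a closed walk at v
  have hokt : Ok A v t v := by
    obtain ⟨i', rfl⟩ : ∃ i', i = i' + 1 := ⟨i - 1, by omega⟩
    rw [pw_succ] at hti
    have hsplit := hti ▸ hwx.2
    obtain ⟨m, hm1, hm2⟩ := ok_split A hsplit
    -- last entry of t determines m; last entry of wx determines v; they agree
    obtain ⟨c1, hc1⟩ := ok_getLast? A hm1 htne
    obtain ⟨c2, hc2⟩ := ok_getLast? A hwx.2 hwxne
    have happ : t ++ pw t i' = pw t i' ++ t := by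
      rw [← pw_succ, pw_add]; simp [pw_succ]
    have hlast : wx.getLast? = t.getLast? := by
      rw [hti, happ, List.getLast?_append_of_ne_nil _ htne]
    rw [hlast, hc1] at hc2
    have hmv : m = v := congrArg Prod.fst (Option.some.inj hc2)
    rwa [hmv] at hm1
  refine ⟨t.length, ?_, ?_, ⟨i, by rw [← hwx.1, hti, pw_length, Nat.mul_comm]⟩,
    ⟨j, by rw [← hwy.1, htj, pw_length, Nat.mul_comm]⟩⟩
  · cases t with
    | nil => exact absurd rfl htne
    | cons a l => simp
  · rw [← card_walks]
    refine Finset.card_pos.mpr ⟨t, ?_⟩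
    rw [mem_walks]
    exact ⟨rfl, hokt⟩





/-- The gcd structure: there is `p ≥ 1` dividing every closed-walk length, and
`x = y + p` with both `x, y` walk lengths (possibly `y = 0`). -/
lemma exists_gcd (hne : ∃ s, 1 ≤ s ∧ 1 ≤ (A ^ s) v v) :
    ∃ p x y : ℕ, 1 ≤ p ∧ x = y + p ∧ 1 ≤ (A ^ x) v v ∧ 1 ≤ (A ^ y) v v ∧
      (∀ n, 1 ≤ (A ^ n) v v → p ∣ n) := by
  obtain ⟨s, hs1, hs2⟩ := hne
  set G : AddSubgroup ℤ :=
    { carrier := {z | ∃ a b : ℕ, 1 ≤ (A ^ a) v v ∧ 1 ≤ (A ^ b) v v ∧ z = (a : ℤ) - b}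
      zero_mem' := ⟨0, 0, by simp [f_zero], by simp [f_zero], by ring⟩
      add_mem' := by
        rintro z w ⟨a, b, ha, hb, rfl⟩ ⟨c, d, hc, hd, rfl⟩
        exact ⟨a + c, b + d, mem_add A v ha hc, mem_add A v hb hd, by push_cast; ring⟩
      neg_mem' := by
        rintro z ⟨a, b, ha, hb, rfl⟩
        exact ⟨b, a, hb, ha, by ring⟩ } with hGdef
  obtain ⟨g, hG⟩ := Int.subgroup_cyclic G
  have hmemG : ∀ z : ℤ, z ∈ G ↔ ∃ n : ℤ, n * g = z := by
    intro z
    rw [hG, AddSubgroup.mem_closure_singleton]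
    simp [zsmul_eq_mul]
  set p := g.natAbs with hp
  -- every walk length is divisible by p
  have hdvd : ∀ n, 1 ≤ (A ^ n) v v → p ∣ n := by
    intro n hn
    have hnG : (n : ℤ) ∈ G := ⟨n, 0, hn, by simp [f_zero], by ring⟩
    obtain ⟨m, hm⟩ := (hmemG _).mp hnG
    have : g ∣ (n : ℤ) := Dvd.intro_left m hm
    have : (p : ℤ) ∣ (n : ℤ) := (Int.natAbs_dvd).mpr this
    exact_mod_cast this
  -- p ∈ G
  have hpG : (p : ℤ) ∈ G := by
    have hgG : g ∈ G := by
      rw [hG]; exact AddSubgroup.subset_closure (Set.mem_singleton g)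
    rcases Int.natAbs_eq g with h | h
    · rwa [← h]
    · have h2 : ((p : ℕ) : ℤ) = -g := by rw [h]; ring
      rw [h2]; exact G.neg_mem hgG
  obtain ⟨x, y, hx, hy, hxy⟩ := hpG
  have hp1 : 1 ≤ p := by
    have := hdvd s hs2
    rcases Nat.eq_zero_or_pos p with h0 | h1
    · rw [h0] at this; omega
    · exact h1
  exact ⟨p, x, y, hp1, by omega, hx, hy, hdvd⟩

/-- representation: all big enough multiples of `p` are walk lengths -/
lemma rep_lemma {p x y : ℕ} (hp : 1 ≤ p) (hxy : x = y + p)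
    (hx : 1 ≤ (A ^ x) v v) (hy : 1 ≤ (A ^ y) v v) (hpy : p ∣ y) :
    ∀ n, p ∣ n → y * y ≤ n → 1 ≤ (A ^ n) v v := by
  intro n hpn hyn
  obtain ⟨y', rfl⟩ := hpy
  rcases Nat.eq_zero_or_pos y' with rfl | hy'
  · -- y = 0, x = p, n = x * (n/p)
    simp only [Nat.mul_zero] at hx hxy ⊢
    obtain ⟨m, rfl⟩ := hpn
    have : 1 ≤ (A ^ (x * m)) v v := mem_mul A v m hx
    rwa [hxy, Nat.zero_add] at this
  · obtain ⟨m, rfl⟩ := hpn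
    set q := m / y' with hq
    set r := m % y' with hr
    have hm : m = y' * q + r := (Nat.div_add_mod m y').symm
    have hrlt : r < y' := Nat.mod_lt _ hy'
    have hqr : r ≤ q := by
      have hmge : y' * y' ≤ m := by
        have h1 : (p * y') * (p * y') ≤ p * m := hyn
        have h2 : y' * y' * p ≤ p * y' * (p * y') := by
          calc y' * y' * p = p * y' * y' := by ring
          _ ≤ (p * y') * (p * y') := Nat.mul_le_mul_left _ (Nat.le_mul_of_pos_left _ hp)
        have h3 : y' * y' * p ≤ p * m := le_trans h2 h1
        calc y' * y' = y' * y' * p / p := by rw [Nat.mul_div_cancel _ hp]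
        _ ≤ p * m / p := Nat.div_le_div_right h3
        _ = m := by rw [Nat.mul_div_cancel_left _ hp]
      have : y' ≤ q := by
        rw [hq]
        exact (Nat.le_div_iff_mul_le hy').mpr (by nlinarith)
      omega
    obtain ⟨d, hd⟩ : ∃ d, q = r + d := ⟨q - r, by omega⟩
    have hid : p * m = d * (p * y') + r * x := by
      rw [hxy, hm, hd]; ring
    rw [hid]
    refine mem_add A v ?_ ?_
    · have := mem_mul A v d hy; rwa [Nat.mul_comm] at this
    · have := mem_mul A v r hx; rwa [Nat.mul_comm] at this


/-- global upper bound on entries of powers -/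
lemma entry_bound : ∀ (n : ℕ) (i j : Fin k),
    (A ^ n) i j ≤ (k * (Finset.univ.sup (fun q : Fin k × Fin k => A q.1 q.2) + 1)) ^ n := by
  set B0 := Finset.univ.sup (fun q : Fin k × Fin k => A q.1 q.2) with hB0
  intro n
  induction n with
  | zero => intro i j; rw [pow_zero, pow_zero, Matrix.one_apply]; split_ifs <;> omega
  | succ n ih =>
    intro i j
    rw [pow_succ', Matrix.mul_apply]
    calc ∑ w, A i w * (A ^ n) w j
        ≤ ∑ _w : Fin k, (B0 + 1) * (k * (B0 + 1)) ^ n := by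
          refine Finset.sum_le_sum fun w _ => Nat.mul_le_mul ?_ (ih w j)
          have : A i w ≤ B0 := Finset.le_sup (f := fun q : Fin k × Fin k => A q.1 q.2)
            (Finset.mem_univ (i, w))
          omega
      _ = k * ((B0 + 1) * (k * (B0 + 1)) ^ n) := by
          rw [Finset.sum_const, Finset.card_univ, Fintype.card_fin, smul_eq_mul]
      _ = (k * (B0 + 1)) ^ (n + 1) := by ring

/-- the main trichotomy, explicit form -/
theorem main_tri (hk : 1 ≤ k) :
    ((A ^ 0) v v = 1 ∧ ∀ n : ℕ, 1 ≤ n → (A ^ n) v v = 0) ∨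
    (∃ p : ℕ, 1 ≤ p ∧ ∀ n : ℕ, (A ^ n) v v = if p ∣ n then 1 else 0) ∨
    (∃ p : ℕ, 1 ≤ p ∧ ∃ g : ℕ → ℕ, ExpTheta g ∧
      ∀ n : ℕ, (A ^ n) v v = if p ∣ n then g n else 0) := by
  by_cases hS : ∃ s, 1 ≤ s ∧ 1 ≤ (A ^ s) v v
  · obtain ⟨p, x, y, hp, hxy, hfx, hfy, hdvd⟩ := exists_gcd A v hS
    have hzero : ∀ n, ¬ p ∣ n → (A ^ n) v v = 0 := by
      intro n hn
      by_contra h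
      exact hn (hdvd n (by omega))
    by_cases hbig : ∃ m, 2 ≤ (A ^ m) v v
    · -- exponential case
      right; right
      obtain ⟨m, hm2⟩ := hbig
      have hm1 : 1 ≤ m := by
        rcases Nat.eq_zero_or_pos m with rfl | h
        · rw [f_zero] at hm2; omega
        · exact h
      have hpm : p ∣ m := hdvd m (by omega)
      have hpy : p ∣ y := hdvd y hfy
      set K := k * (Finset.univ.sup (fun q : Fin k × Fin k => A q.1 q.2) + 1) with hK
      have hK1 : 1 ≤ K := by
        have : 1 ≤ k := hk
        calc 1 = 1 * 1 := rfl
        _ ≤ k * (Finset.univ.sup (fun q : Fin k × Fin k => A q.1 q.2) + 1) :=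
          Nat.mul_le_mul hk (by omega)
      refine ⟨p, hp, fun n => if p ∣ n then (A ^ n) v v else 2 ^ n, ?_, ?_⟩
      · -- ExpTheta
        refine ⟨1 / (2 * m), K, by positivity, by exact_mod_cast Nat.lt_of_lt_of_le one_pos hK1,
          2 * (y * y + m), fun n hn => ?_⟩
        have hupper : ∀ n' : ℕ, ((A ^ n') v v : ℝ) ≤ (2 : ℝ) ^ ((K : ℝ) * n') := by
          intro n'
          have h1 : (A ^ n') v v ≤ 2 ^ (K * n') := by
            calc (A ^ n') v v ≤ K ^ n' := entry_bound A n' v v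
            _ ≤ (2 ^ K) ^ n' := Nat.pow_le_pow_left (Nat.le_of_lt (Nat.lt_two_pow_self (n := K))) n'
            _ = 2 ^ (K * n') := by rw [← pow_mul]
          calc ((A ^ n') v v : ℝ) ≤ ((2 ^ (K * n') : ℕ) : ℝ) := by exact_mod_cast h1
          _ = (2 : ℝ) ^ ((K * n' : ℕ) : ℝ) := by
              rw [Real.rpow_natCast]; push_cast; ring
          _ = (2 : ℝ) ^ ((K : ℝ) * n') := by push_cast; ring_nf
        have honele : ∀ a b : ℝ, a ≤ b → (2:ℝ) ^ a ≤ (2:ℝ) ^ b := fun a b hab =>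
          Real.rpow_le_rpow_of_exponent_le (by norm_num) hab
        by_cases hpn : p ∣ n
        · simp only [if_pos hpn]
          constructor
          · -- lower bound
            set q := (n - y * y) / m with hq
            have hyyn : y * y ≤ n := by omega
            have hdm := Nat.div_add_mod (n - y * y) m
            set s := (n - y * y) % m with hs
            have hslt : s < m := Nat.mod_lt _ hm1
            have hmqs : m * q + s = n - y * y := hdm
            have hr : n = m * q + (y * y + s) := by omega
            have h2mq : n ≤ 2 * (m * q) := by
              have h3 : n = y * y + (m * q) + s := by omega
              set t := m * q
              omega
            have hfr : 1 ≤ (A ^ (y * y + s)) v v := by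
              refine rep_lemma A v hp hxy hfx hfy hpy _ ?_ (by omega)
              have h4 : p ∣ m * q := Dvd.dvd.mul_right hpm q
              have h5 : y * y + s = n - m * q := by omega
              rw [h5]
              exact Nat.dvd_sub hpn h4
            have hlow : 2 ^ q ≤ (A ^ n) v v := by
              calc 2 ^ q ≤ ((A ^ m) v v) ^ q := Nat.pow_le_pow_left hm2 q
              _ ≤ (A ^ (m * q)) v v := pow_le_f A v m q
              _ ≤ (A ^ (m * q)) v v * (A ^ (y * y + s)) v v :=
                  Nat.le_mul_of_pos_right _ (by omega)
              _ ≤ (A ^ (m * q + (y * y + s))) v v := supermult A v _ _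
              _ = (A ^ n) v v := by rw [← hr]
            calc (2 : ℝ) ^ (1 / (2 * (m : ℝ)) * n) ≤ (2 : ℝ) ^ ((q : ℕ) : ℝ) := by
                  refine honele _ _ ?_
                  rw [div_mul_eq_mul_div, one_mul, div_le_iff₀ (by positivity)]
                  have : (n : ℝ) ≤ 2 * (m * q) := by exact_mod_cast h2mq
                  nlinarith [this]
            _ = ((2 ^ q : ℕ) : ℝ) := by rw [Real.rpow_natCast]; push_cast; ring
            _ ≤ ((A ^ n) v v : ℝ) := by exact_mod_cast hlow
          · exact hupper n
        · simp only [if_neg hpn]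
          have e1 : ((2 ^ n : ℕ) : ℝ) = (2 : ℝ) ^ ((n : ℕ) : ℝ) := by
            rw [Real.rpow_natCast]; push_cast; ring
          have hml : (1 : ℝ) ≤ m := by exact_mod_cast hm1
          have hKl : (1 : ℝ) ≤ K := by exact_mod_cast hK1
          have hnn : (0 : ℝ) ≤ n := by positivity
          constructor
          · rw [e1]
            refine honele _ _ ?_
            rw [div_mul_eq_mul_div, one_mul, div_le_iff₀ (by positivity)]
            nlinarith
          · rw [e1]
            refine honele _ _ ?_
            nlinarith
      · intro n
        by_cases hpn : p ∣ n
        · simp [hpn]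
        · simp [hpn, hzero n hpn]
    · -- periodic case
      right; left
      push_neg at hbig
      have hsmall : ∀ n, (A ^ n) v v ≤ 1 := fun n => by have := hbig n; omega
      have hfp : 1 ≤ (A ^ p) v v := by
        rcases Nat.eq_zero_or_pos y with rfl | hy1
        · rw [Nat.zero_add] at hxy; rwa [← hxy]
        · obtain ⟨d, hd1, hfd, hdx, hdy⟩ := exists_dvd A v hsmall (by omega) hy1 hfx hfy
          have hpd : p ∣ d := hdvd d hfd
          have hdp : d ∣ p := by
            have h1 : d ∣ x - y := Nat.dvd_sub hdx hdy
            have h2 : x - y = p := by omega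
            rwa [h2] at h1
          rwa [Nat.dvd_antisymm hdp hpd] at hfd
      refine ⟨p, hp, fun n => ?_⟩
      by_cases hpn : p ∣ n
      · rw [if_pos hpn]
        obtain ⟨c, rfl⟩ := hpn
        have h1 := mem_mul A v c hfp
        have h2 := hsmall (p * c)
        omega
      · rw [if_neg hpn]; exact hzero n hpn
  · -- zero case
    left
    refine ⟨f_zero A v, fun n hn => ?_⟩
    by_contra h
    exact hS ⟨n, hn, by omega⟩


lemma not_12 (h1 : (A ^ 0) v v = 1 ∧ ∀ n : ℕ, 1 ≤ n → (A ^ n) v v = 0)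
    (h2 : ∃ p : ℕ, 1 ≤ p ∧ ∀ n : ℕ, (A ^ n) v v = if p ∣ n then 1 else 0) : False := by
  obtain ⟨p, hp, hf⟩ := h2
  have := hf p
  rw [if_pos dvd_rfl] at this
  have := h1.2 p hp
  omega

lemma not_13 (h1 : (A ^ 0) v v = 1 ∧ ∀ n : ℕ, 1 ≤ n → (A ^ n) v v = 0)
    (h3 : ∃ p : ℕ, 1 ≤ p ∧ ∃ g : ℕ → ℕ, ExpTheta g ∧
      ∀ n : ℕ, (A ^ n) v v = if p ∣ n then g n else 0) : False := by
  obtain ⟨p, hp, g, ⟨γ₁, γ₂, hγ₁, _, N, hN⟩, hf⟩ := h3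
  set n := p * (N + 1) with hn
  have hpn : p ∣ n := ⟨N + 1, rfl⟩
  have hn1 : N + 1 ≤ n := Nat.le_mul_of_pos_left _ hp
  have h0 := hf n
  rw [if_pos hpn, h1.2 n (by omega)] at h0
  have hb := (hN n (by omega)).1
  rw [← h0] at hb
  simp only [Nat.cast_zero] at hb
  have := Real.rpow_pos_of_pos (by norm_num : (0:ℝ) < 2) (γ₁ * n)
  linarith

lemma not_23 (h2 : ∃ p : ℕ, 1 ≤ p ∧ ∀ n : ℕ, (A ^ n) v v = if p ∣ n then 1 else 0)
    (h3 : ∃ p : ℕ, 1 ≤ p ∧ ∃ g : ℕ → ℕ, ExpTheta g ∧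
      ∀ n : ℕ, (A ^ n) v v = if p ∣ n then g n else 0) : False := by
  obtain ⟨p, hp, hf2⟩ := h2
  obtain ⟨p', hp', g, ⟨γ₁, γ₂, hγ₁, _, N, hN⟩, hf3⟩ := h3
  set c := N + Nat.ceil (1 / γ₁) + 1 with hc
  set n := p * p' * c with hn
  have hpn : p ∣ n := ⟨p' * c, by ring⟩
  have hpn' : p' ∣ n := ⟨p * c, by ring⟩
  have hcn : c ≤ n := by
    calc c = 1 * c := (Nat.one_mul c).symm
    _ ≤ p * p' * c := Nat.mul_le_mul_right c (Nat.one_le_iff_ne_zero.mpr (by positivity))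
  have h02 := hf2 n
  rw [if_pos hpn] at h02
  have h03 := hf3 n
  rw [if_pos hpn'] at h03
  have hg1 : g n = 1 := by omega
  have hb := (hN n (by omega)).1
  rw [hg1] at hb
  simp only [Nat.cast_one] at hb
  have hγn : 1 ≤ γ₁ * n := by
    have h5 : (1 / γ₁ : ℝ) ≤ Nat.ceil (1 / γ₁) := Nat.le_ceil _
    have h6 : (Nat.ceil (1 / γ₁) : ℝ) ≤ n := by
      have : Nat.ceil (1 / γ₁) ≤ n := by omega
      exact_mod_cast this
    have h7 : (1 / γ₁ : ℝ) ≤ n := le_trans h5 h6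
    rw [div_le_iff₀ hγ₁] at h7
    linarith
  have h8 : (2 : ℝ) ^ (1 : ℝ) ≤ (2 : ℝ) ^ (γ₁ * n) :=
    Real.rpow_le_rpow_of_exponent_le (by norm_num) hγn
  rw [Real.rpow_one] at h8
  linarith


end DET2

/-- trichotomy for the diagonal entries of powers of a nonnegative
integer matrix: exactly one of the three listed behaviours occurs. -/
theorem diagonal_entry_trichotomy (k : ℕ) (hk : 1 ≤ k)
    (A : Matrix (Fin k) (Fin k) ℕ) (v : Fin k) :
    let f : ℕ → ℕ := fun n => (A ^ n) v v
    let P1 : Prop := f 0 = 1 ∧ ∀ n : ℕ, 1 ≤ n → f n = 0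
    let P2 : Prop := ∃ p : ℕ, 1 ≤ p ∧ ∀ n : ℕ, f n = if p ∣ n then 1 else 0
    let P3 : Prop := ∃ p : ℕ, 1 ≤ p ∧ ∃ g : ℕ → ℕ, ExpTheta g ∧
      ∀ n : ℕ, f n = if p ∣ n then g n else 0
    (P1 ∧ ¬P2 ∧ ¬P3) ∨ (¬P1 ∧ P2 ∧ ¬P3) ∨ (¬P1 ∧ ¬P2 ∧ P3) := by
  intro f P1 P2 P3
  rcases DET2.main_tri A v hk with h | h | h
  · exact Or.inl ⟨h, fun h2 => DET2.not_12 A v h h2, fun h3 => DET2.not_13 A v h h3⟩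
  · exact Or.inr (Or.inl ⟨fun h1 => DET2.not_12 A v h1 h, h,
      fun h3 => DET2.not_23 A v h h3⟩)
  · exact Or.inr (Or.inr ⟨fun h1 => DET2.not_13 A v h1 h,
      fun h2 => DET2.not_23 A v h2 h, h⟩)
end
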